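/- arXiv:2603.21602 — 6 statements merged into one kernel-verified Lean document; each statement's English description precedes it below -/
import Mathlib

section
/- There is an absolute constant C > 0 such that for all real numbers R ≥ 1 and 0 ≤ r₁ < r₂ ≤ R, setting Ψ = {(x,t) ∈ ℝ³ × ℝ : r₁ + |t| < |x| < r₂ + |t| and |x| + |t| > R}, one has ‖χ_Ψ W‖_Y ≤ C · (r₂ − r₁)^(1/10) · R^(−3/5). -/
open MeasureTheory Real Set

noncomputable section

/-- The ground state `W(x) = (1/3 + |x|^2)^(-1/2)` on `ℝ³`. -/
def W3 (x : EuclideanSpace ℝ (Fin 3)) : ℝ := (1/3 + ‖x‖^2) ^ (-(1:ℝ)/2)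

/-- The rescaled ground state `W_λ(x) = λ^(-1/2) W(x/λ)`. -/
def Wlam (lam : ℝ) (x : EuclideanSpace ℝ (Fin 3)) : ℝ := lam ^ (-(1:ℝ)/2) * W3 (lam⁻¹ • x)

/-- The Strichartz norm `‖χ_Ψ u‖_Y = (∫ (∫_{(x,t)∈Ψ} |u|^10 dx)^(1/2) dt)^(1/5)`. -/
def Ynorm (Ψ : Set (EuclideanSpace ℝ (Fin 3) × ℝ))
    (u : EuclideanSpace ℝ (Fin 3) → ℝ → ℝ) : ℝ :=
  (∫ t : ℝ, (∫ x in {x | (x, t) ∈ Ψ}, |u x t| ^ 10) ^ ((1:ℝ)/2)) ^ ((1:ℝ)/5)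

/-- The norm `‖χ_Ψ u‖_{L¹L²} = ∫ (∫_{(x,t)∈Ψ} |u|² dx)^(1/2) dt`. -/
def L1L2 (Ψ : Set (EuclideanSpace ℝ (Fin 3) × ℝ))
    (u : EuclideanSpace ℝ (Fin 3) → ℝ → ℝ) : ℝ :=
  ∫ t : ℝ, (∫ x in {x | (x, t) ∈ Ψ}, (u x t) ^ 2) ^ ((1:ℝ)/2)

/-- The channel region `Ω_{r₁,r₂} = {(x,t) : |t| + r₁ < |x| < |t| + r₂}`. -/
def channel (r₁ r₂ : ℝ) : Set (EuclideanSpace ℝ (Fin 3) × ℝ) :=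
  {p | |p.2| + r₁ < ‖p.1‖ ∧ ‖p.1‖ < |p.2| + r₂}

/-- The radial free wave with radiation profile `G` (in the negative time direction):
`v(x,t) = |x|⁻¹ ∫_{t-|x|}^{t+|x|} G(s) ds`. -/
def freeWave (G : ℝ → ℝ) (x : EuclideanSpace ℝ (Fin 3)) (t : ℝ) : ℝ :=
  ‖x‖⁻¹ * ∫ s in (t - ‖x‖)..(t + ‖x‖), G s

/-- `‖G‖_{L²(E)} = (∫_E |G|²)^(1/2)`. -/
def L2on (G : ℝ → ℝ) (E : Set ℝ) : ℝ := (∫ s in E, (G s)^2) ^ ((1:ℝ)/2)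

/-- The set whose supremum is `sup_{0<r<λ} (λ/r) ∫_{-r}^r |G(s)|² ds`. -/
def tauA (G : ℝ → ℝ) (lam : ℝ) : Set ℝ :=
  {A | ∃ r, 0 < r ∧ r < lam ∧ A = (lam / r) * ∫ s in (-r)..r, (G s)^2}

/-- The set whose supremum is `sup_{r>0} r^(-1/2) ∫_{-r}^r |G(s)| ds`. -/
def tauB (G : ℝ → ℝ) : Set ℝ :=
  {B | ∃ r, 0 < r ∧ B = (∫ s in (-r)..r, |G s|) / Real.sqrt r}

/-- `τ = (sup_{0<r<λ} (λ/r)∫_{-r}^r |G|²)^(1/2) + sup_{r>0} r^(-1/2)∫_{-r}^r |G|`. -/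
def tau (G : ℝ → ℝ) (lam : ℝ) : ℝ := Real.sqrt (sSup (tauA G lam)) + sSup (tauB G)

local notation "E3" => EuclideanSpace ℝ (Fin 3)

def kap : ℝ := (volume (Metric.ball (0:E3) 1)).toReal

lemma kap_nonneg : 0 ≤ kap := ENNReal.toReal_nonneg

lemma vol_ball_toReal {r : ℝ} (hr : 0 ≤ r) :
    (volume (Metric.ball (0:E3) r)).toReal = r ^ 3 * kap := by
  rw [Measure.addHaar_ball volume (0:E3) hr, finrank_euclideanSpace_fin,
    ENNReal.toReal_mul, ENNReal.toReal_ofReal (by positivity)]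
  rfl

lemma vol_shell_le {a δ : ℝ} (ha : 0 < a) (hδ : 0 < δ) :
    (volume {x : E3 | a < ‖x‖ ∧ ‖x‖ < a + δ}).toReal ≤ ((a + δ) ^ 3 - a ^ 3) * kap := by
  have hsub : {x : E3 | a < ‖x‖ ∧ ‖x‖ < a + δ} ⊆
      Metric.ball 0 (a + δ) \ Metric.ball 0 a := by
    intro x hx
    constructor
    · simpa [Metric.mem_ball, dist_zero_right] using hx.2
    · simp only [Metric.mem_ball, dist_zero_right, not_lt]
      exact hx.1.le
  have hfin : volume (Metric.ball (0:E3) (a + δ)) ≠ ⊤ := measure_ball_lt_top.ne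
  have hdiff : volume (Metric.ball (0:E3) (a + δ) \ Metric.ball 0 a)
      = volume (Metric.ball (0:E3) (a + δ)) - volume (Metric.ball (0:E3) a) :=
    measure_diff (Metric.ball_subset_ball (by linarith)) measurableSet_ball.nullMeasurableSet
      measure_ball_lt_top.ne
  have hle : volume {x : E3 | a < ‖x‖ ∧ ‖x‖ < a + δ} ≤ volume (Metric.ball (0:E3) (a + δ) \ Metric.ball 0 a) := measure_mono hsub
  have hdfin : volume (Metric.ball (0:E3) (a + δ) \ Metric.ball 0 a) ≠ ⊤ :=
    ((measure_mono Set.diff_subset).trans_lt (measure_ball_lt_top (x := (0:E3)) (r := a + δ))).ne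
  calc (volume {x : E3 | a < ‖x‖ ∧ ‖x‖ < a + δ}).toReal
      ≤ (volume (Metric.ball (0:E3) (a + δ) \ Metric.ball 0 a)).toReal :=
        ENNReal.toReal_mono hdfin hle
    _ = ((a + δ) ^ 3 - a ^ 3) * kap := by
        rw [hdiff, ENNReal.toReal_sub_of_le (measure_mono (Metric.ball_subset_ball (by linarith)))
          hfin, vol_ball_toReal (by linarith), vol_ball_toReal ha.le]
        ring

lemma W3_pos (x : E3) : 0 < W3 x := by
  unfold W3
  exact Real.rpow_pos_of_pos (by positivity) _

lemma W3_le {x : E3} (hx : 0 < ‖x‖) : |W3 x| ≤ ‖x‖⁻¹ := by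
  rw [abs_of_pos (W3_pos x)]
  unfold W3
  have h1 : (1/3 + ‖x‖ ^ 2 : ℝ) ^ (-(1:ℝ)/2) ≤ (‖x‖ ^ 2 : ℝ) ^ (-(1:ℝ)/2) := by
    apply Real.rpow_le_rpow_of_nonpos (by positivity) (by linarith) (by norm_num)
  refine h1.trans_eq ?_
  rw [← Real.rpow_natCast ‖x‖ 2, ← Real.rpow_mul (norm_nonneg x)]
  norm_num [Real.rpow_neg_one]

def phi1 (t : ℝ) : ℝ := ((max |t| 1) ^ 4)⁻¹

lemma phi1_nonneg (t : ℝ) : 0 ≤ phi1 t := by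
  unfold phi1
  positivity

lemma phi1_cont : Continuous phi1 := by
  apply ((continuous_abs.max continuous_const).pow 4).inv₀
  intro t
  have : (1:ℝ) ≤ max |t| 1 := le_max_right _ _
  exact (pow_pos (by linarith : (0:ℝ) < max |t| 1) 4).ne'

lemma phi1_integrable : Integrable phi1 := by
  apply Integrable.mono' (integrable_inv_one_add_sq.const_mul 4) phi1_cont.aestronglyMeasurable
  filter_upwards with t
  have hm : (1:ℝ) ≤ max |t| 1 := le_max_right _ _
  have ht : |t| ≤ max |t| 1 := le_max_left _ _
  have h2 : (0:ℝ) < 1 + t ^ 2 := by positivity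
  have h3 : (0:ℝ) < (max |t| 1) ^ 4 := by positivity
  have h1 : 1 + t ^ 2 ≤ 4 * (max |t| 1) ^ 4 := by
    have e1 : t ^ 2 ≤ (max |t| 1) ^ 2 := by
      rw [← sq_abs]
      exact pow_le_pow_left₀ (abs_nonneg t) ht 2
    have e2 : (max |t| 1) ^ 2 ≤ (max |t| 1) ^ 4 := pow_le_pow_right₀ (by linarith) (by norm_num)
    have e3 : (1:ℝ) ≤ (max |t| 1) ^ 4 := one_le_pow₀ hm
    linarith
  rw [Real.norm_eq_abs, abs_of_nonneg (phi1_nonneg t)]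
  unfold phi1
  rw [← div_eq_mul_inv, le_div_iff₀ h2, inv_mul_le_iff₀ h3]
  linarith

lemma inner_bound (R r₁ r₂ t : ℝ) (hR : 1 ≤ R) (h1 : 0 ≤ r₁) (h12 : r₁ < r₂) (h2R : r₂ ≤ R) :
    (∫ x in {x : E3 | r₁ + |t| < ‖x‖ ∧ ‖x‖ < r₂ + |t| ∧ R < ‖x‖ + |t|}, |W3 x| ^ 10)
      ≤ 13 * kap * (r₂ - r₁) * ((max |t| (R/2)) ^ 8)⁻¹ := by
  set δ := r₂ - r₁ with hδdef
  have hδ : 0 < δ := by simp [hδdef]; linarith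
  set a := max (r₁ + |t|) (R - |t|) with hadef
  set m := max |t| (R/2) with hmdef
  have hm : 0 < m := lt_of_lt_of_le (by linarith) (le_max_right _ _)
  have hma : m ≤ a := by
    rcases le_total |t| (R/2) with h | h
    · apply max_le
      · exact le_trans h (by
          have : R - |t| ≤ a := le_max_right _ _
          linarith)
      · have : R - |t| ≤ a := le_max_right _ _
        linarith
    · apply max_le
      · have : r₁ + |t| ≤ a := le_max_left _ _
        linarith
      · have : r₁ + |t| ≤ a := le_max_left _ _
        have h0 : 0 ≤ |t| := abs_nonneg t
        linarith
  have ha : 0 < a := lt_of_lt_of_le hm hma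
  have hδ2a : δ ≤ 2 * a := by
    have : R / 2 ≤ m := le_max_right _ _
    have h0 : 0 ≤ r₁ + |t| := by positivity
    simp only [hδdef]
    linarith [hma]
  set S := {x : E3 | r₁ + |t| < ‖x‖ ∧ ‖x‖ < r₂ + |t| ∧ R < ‖x‖ + |t|} with hSdef
  have hsub : S ⊆ {x : E3 | a < ‖x‖ ∧ ‖x‖ < a + δ} := by
    intro x hx
    obtain ⟨hx1, hx2, hx3⟩ := hx
    constructor
    · exact max_lt hx1 (by linarith)
    · have : r₁ + |t| ≤ a := le_max_left _ _
      simp only [hδdef]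
      linarith
  have hSm : MeasurableSet S := by
    apply IsOpen.measurableSet
    have hc : Continuous fun x : E3 => ‖x‖ := continuous_norm
    exact (isOpen_lt continuous_const hc).inter
      ((isOpen_lt hc continuous_const).inter (isOpen_lt continuous_const (hc.add continuous_const)))
  have hSfin : volume S < ⊤ := by
    apply lt_of_le_of_lt (measure_mono (hsub.trans ?_)) (measure_ball_lt_top (x := (0:E3)) (r := a + δ))
    intro x hx
    simpa [Metric.mem_ball, dist_zero_right] using hx.2
  have hbound : ∀ x ∈ S, ‖|W3 x| ^ 10‖ ≤ (a ^ 10)⁻¹ := by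
    intro x hx
    have hax : a < ‖x‖ := (hsub hx).1
    have hxpos : 0 < ‖x‖ := lt_trans ha hax
    rw [Real.norm_eq_abs, abs_of_nonneg (by positivity)]
    have h1 : |W3 x| ≤ ‖x‖⁻¹ := W3_le hxpos
    have h2 : ‖x‖⁻¹ ≤ a⁻¹ := by
      apply inv_anti₀ ha hax.le
    calc |W3 x| ^ 10 ≤ (a⁻¹) ^ 10 :=
          pow_le_pow_left₀ (abs_nonneg _) (h1.trans h2) 10
      _ = (a ^ 10)⁻¹ := by rw [inv_pow]
  have hint : (∫ x in S, |W3 x| ^ 10) ≤ (a ^ 10)⁻¹ * (volume S).toReal := by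
    have := MeasureTheory.norm_setIntegral_le_of_norm_le_const (μ := volume) hSfin
      hbound
    calc (∫ x in S, |W3 x| ^ 10) ≤ ‖∫ x in S, |W3 x| ^ 10‖ := le_abs_self _
      _ ≤ (a ^ 10)⁻¹ * (volume S).toReal := this
  have hvol : (volume S).toReal ≤ ((a + δ) ^ 3 - a ^ 3) * kap := by
    refine le_trans ?_ (vol_shell_le ha hδ)
    apply ENNReal.toReal_mono
    · exact ((measure_mono (by
        intro x hx
        simpa [Metric.mem_ball, dist_zero_right] using hx.2)).trans_lt
        (measure_ball_lt_top (x := (0:E3)) (r := a + δ))).ne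
    · exact measure_mono hsub
  have hcube : ((a + δ) ^ 3 - a ^ 3) ≤ 13 * δ * a ^ 2 := by nlinarith [mul_nonneg (mul_nonneg ha.le hδ.le) (sub_nonneg.2 hδ2a), mul_nonneg (mul_nonneg hδ.le hδ.le) (sub_nonneg.2 hδ2a)]
  calc (∫ x in S, |W3 x| ^ 10) ≤ (a ^ 10)⁻¹ * (volume S).toReal := hint
    _ ≤ (a ^ 10)⁻¹ * (((a + δ) ^ 3 - a ^ 3) * kap) := by
        apply mul_le_mul_of_nonneg_left hvol (by positivity)
    _ ≤ (a ^ 10)⁻¹ * ((13 * δ * a ^ 2) * kap) := by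
        apply mul_le_mul_of_nonneg_left (mul_le_mul_of_nonneg_right hcube kap_nonneg)
          (by positivity)
    _ = 13 * kap * δ * (a ^ 8)⁻¹ := by field_simp
    _ ≤ 13 * kap * δ * (m ^ 8)⁻¹ := by
        apply mul_le_mul_of_nonneg_left _ (mul_nonneg (mul_nonneg (by norm_num : (0:ℝ) ≤ 13) kap_nonneg) hδ.le)
        apply inv_anti₀ (by positivity) (pow_le_pow_left₀ hm.le hma 8)


theorem stmt0 :
    ∃ C : ℝ, 0 < C ∧ ∀ R r₁ r₂ : ℝ, 1 ≤ R → 0 ≤ r₁ → r₁ < r₂ → r₂ ≤ R →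
      Ynorm {p | r₁ + |p.2| < ‖p.1‖ ∧ ‖p.1‖ < r₂ + |p.2| ∧ R < ‖p.1‖ + |p.2|}
          (fun x _ => W3 x)
        ≤ C * (r₂ - r₁) ^ ((1:ℝ)/10) * R ^ (-(3:ℝ)/5) := by
  set I1 := ∫ t, phi1 t with hI1def
  have hI1 : 0 ≤ I1 := integral_nonneg phi1_nonneg
  set A : ℝ := Real.sqrt (13 * kap) * 8 * I1 with hAdef
  have hA : 0 ≤ A := mul_nonneg (mul_nonneg (Real.sqrt_nonneg _) (by norm_num)) hI1
  refine ⟨max 1 (A ^ ((1:ℝ)/5)), lt_of_lt_of_le one_pos (le_max_left _ _), ?_⟩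
  intro R r₁ r₂ hR h1 h12 h2R
  have hδ : 0 < r₂ - r₁ := by linarith
  have hRpos : 0 < R := by linarith
  set δ := r₂ - r₁ with hδdef
  set c := R/2 with hcdef
  have hc : 0 < c := by positivity
  set g : ℝ → ℝ := fun t =>
    (∫ x in {x : E3 | r₁ + |t| < ‖x‖ ∧ ‖x‖ < r₂ + |t| ∧ R < ‖x‖ + |t|}, |W3 x| ^ 10) ^ ((1:ℝ)/2)
    with hgdef
  set B := Real.sqrt (13 * kap * δ) with hBdef
  have hBnn : 0 ≤ B := Real.sqrt_nonneg _
  set h : ℝ → ℝ := fun t => B * (c⁻¹ ^ 4 * phi1 (c⁻¹ * t)) with hhdef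
  have hgnn : ∀ t, 0 ≤ g t := fun t =>
    Real.rpow_nonneg (integral_nonneg (fun x => by positivity)) _
  have hBsq : B ^ 2 = 13 * kap * δ :=
    Real.sq_sqrt (mul_nonneg (mul_nonneg (by norm_num) kap_nonneg) hδ.le)
  have hgh : ∀ t, g t ≤ h t := by
    intro t
    have hm : 0 < max |t| c := lt_of_lt_of_le hc (le_max_right _ _)
    have key := inner_bound R r₁ r₂ t hR h1 h12 h2R
    have hB2 : 13 * kap * δ * ((max |t| c) ^ 8)⁻¹ = (B * ((max |t| c) ^ 4)⁻¹) ^ 2 := by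
      rw [mul_pow, hBsq, inv_pow, ← pow_mul]
    have step1 : g t ≤ (13 * kap * δ * ((max |t| c) ^ 8)⁻¹) ^ ((1:ℝ)/2) :=
      Real.rpow_le_rpow (integral_nonneg (fun x => by positivity)) key (by norm_num)
    have step2 : (13 * kap * δ * ((max |t| c) ^ 8)⁻¹) ^ ((1:ℝ)/2)
        = B * ((max |t| c) ^ 4)⁻¹ := by
      rw [hB2, ← Real.sqrt_eq_rpow, Real.sqrt_sq (mul_nonneg hBnn (by positivity))]
    have hphi : c⁻¹ ^ 4 * phi1 (c⁻¹ * t) = ((max |t| c) ^ 4)⁻¹ := by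
      unfold phi1
      have hmax : c * max (|c⁻¹ * t|) 1 = max |t| c := by
        rw [abs_mul, abs_of_pos (inv_pos.2 hc), mul_max_of_nonneg _ _ hc.le, mul_one,
          show c * (c⁻¹ * |t|) = |t| by field_simp]
      calc c⁻¹ ^ 4 * ((max (|c⁻¹ * t|) 1) ^ 4)⁻¹
          = ((c * max (|c⁻¹ * t|) 1) ^ 4)⁻¹ := by rw [mul_pow, mul_inv, inv_pow]
        _ = ((max |t| c) ^ 4)⁻¹ := by rw [hmax]
    calc g t ≤ (13 * kap * δ * ((max |t| c) ^ 8)⁻¹) ^ ((1:ℝ)/2) := step1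
      _ = B * ((max |t| c) ^ 4)⁻¹ := step2
      _ = h t := by rw [hhdef]; simp only; rw [hphi]
  have hh_int : Integrable h := by
    exact ((phi1_integrable.comp_mul_left' (inv_ne_zero hc.ne')).const_mul _).const_mul _
  have hh_val : (∫ t, h t) = B * (c⁻¹ ^ 4 * (c * I1)) := by
    rw [hhdef]
    rw [MeasureTheory.integral_const_mul, MeasureTheory.integral_const_mul, Measure.integral_comp_mul_left phi1 c⁻¹, inv_inv,
      abs_of_pos hc, smul_eq_mul]
  have hint : (∫ t, g t) ≤ ∫ t, h t :=
    integral_mono_of_nonneg (Filter.Eventually.of_forall hgnn) hh_int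
      (Filter.Eventually.of_forall hgh)
  have hR3 : R ^ (-(3:ℝ)) = (R ^ 3)⁻¹ := by
    rw [show (-(3:ℝ)) = -((3:ℕ):ℝ) by norm_num, Real.rpow_neg hRpos.le, Real.rpow_natCast]
  have hBsplit : B = Real.sqrt (13 * kap) * δ ^ ((1:ℝ)/2) := by
    rw [hBdef, Real.sqrt_mul (mul_nonneg (by norm_num) kap_nonneg), Real.sqrt_eq_rpow, Real.sqrt_eq_rpow]
  have hM : (∫ t, g t) ≤ A * δ ^ ((1:ℝ)/2) * R ^ (-(3:ℝ)) := by
    refine le_trans hint ?_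
    rw [hh_val, hBsplit, hR3, hAdef]
    have hcc : c⁻¹ ^ 4 * (c * I1) = 8 * (R ^ 3)⁻¹ * I1 := by
      rw [hcdef]; field_simp; ring
    rw [hcc]
    apply le_of_eq
    ring
  have hY : Ynorm {p : EuclideanSpace ℝ (Fin 3) × ℝ | r₁ + |p.2| < ‖p.1‖ ∧ ‖p.1‖ < r₂ + |p.2| ∧ R < ‖p.1‖ + |p.2|}
      (fun x _ => W3 x) = (∫ t, g t) ^ ((1:ℝ)/5) := rfl
  rw [hY]
  calc (∫ t, g t) ^ ((1:ℝ)/5)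
      ≤ (A * δ ^ ((1:ℝ)/2) * R ^ (-(3:ℝ))) ^ ((1:ℝ)/5) :=
        Real.rpow_le_rpow (integral_nonneg hgnn) hM (by norm_num)
    _ = A ^ ((1:ℝ)/5) * δ ^ ((1:ℝ)/10) * R ^ (-(3:ℝ)/5) := by
        rw [Real.mul_rpow (mul_nonneg hA (Real.rpow_nonneg hδ.le _)) (Real.rpow_nonneg hRpos.le _),
          Real.mul_rpow hA (Real.rpow_nonneg hδ.le _),
          ← Real.rpow_mul hδ.le, ← Real.rpow_mul hRpos.le]
        norm_num
    _ ≤ max 1 (A ^ ((1:ℝ)/5)) * δ ^ ((1:ℝ)/10) * R ^ (-(3:ℝ)/5) := by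
        apply mul_le_mul_of_nonneg_right
          (mul_le_mul_of_nonneg_right (le_max_right _ _) (Real.rpow_nonneg hδ.le _))
          (Real.rpow_nonneg hRpos.le _)
end
end

section
/- There is an absolute constant C > 0 such that for every λ > 1 and all real numbers 1/2 ≤ r₁ < r₂, one has ‖χ_{Ω_{r₁,r₂}} W⁴·W_λ‖_{L¹L²} ≤ C · λ^(−1/2) · (r₂ − r₁)^(1/2) · r₁^(−2) and ‖χ_{Ω_{r₁,r₂}} W³·W_λ²‖_{L¹L²} ≤ C · λ^(−1) · (r₂ − r₁)^(1/2) · r₁^(−1). -/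
open MeasureTheory Real Set

noncomputable section

/-! ### Auxiliary lemmas -/

abbrev E3aux := EuclideanSpace ℝ (Fin 3)

/-- The (finite, nonnegative) volume of the unit ball in `ℝ³`. -/
def c3aux : ℝ := (volume (Metric.ball (0:E3aux) 1)).toReal

lemma c3aux_nonneg : 0 ≤ c3aux := ENNReal.toReal_nonneg

lemma annulus_int_aux (a b : ℝ) (ha : 0 < a) (hab : a ≤ b) :
    ∫ x in {x : E3aux | a < ‖x‖ ∧ ‖x‖ < b}, ‖x‖ ^ (-(2:ℝ)) = 3 * c3aux * (b - a) := by
  have hset : {x : E3aux | a < ‖x‖ ∧ ‖x‖ < b} = (fun x : E3aux => ‖x‖) ⁻¹' (Ioo a b) := rfl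
  have hms : MeasurableSet {x : E3aux | a < ‖x‖ ∧ ‖x‖ < b} := by
    rw [hset]; exact isOpen_Ioo.preimage continuous_norm |>.measurableSet
  set f : ℝ → ℝ := (Ioo a b).indicator (fun y => y ^ (-(2:ℝ))) with hf
  have h1 : ∫ x in {x : E3aux | a < ‖x‖ ∧ ‖x‖ < b}, ‖x‖ ^ (-(2:ℝ)) = ∫ x : E3aux, f ‖x‖ := by
    rw [← integral_indicator hms]
    refine integral_congr_ae (Filter.Eventually.of_forall fun x => ?_)
    rw [hset, hf]
    exact Set.indicator_comp_right (M := ℝ) (g := fun y : ℝ => y ^ (-(2:ℝ)))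
      (fun x : E3aux => ‖x‖)
  rw [h1, integral_fun_norm_addHaar volume f]
  have hdim : Module.finrank ℝ E3aux = 3 := finrank_euclideanSpace_fin
  rw [hdim]
  have h2 : ∫ y in Ioi (0:ℝ), y ^ (3 - 1) • f y = b - a := by
    have : ∀ y ∈ Ioi (0:ℝ), y ^ (3-1) • f y = (Ioo a b).indicator (fun _ => (1:ℝ)) y := by
      intro y hy
      rw [hf, smul_eq_mul]
      by_cases h : y ∈ Ioo a b
      · rw [Set.indicator_of_mem h, Set.indicator_of_mem h]
        have hy0 : (0:ℝ) < y := hy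
        rw [← Real.rpow_natCast y (3-1), ← Real.rpow_add hy0]
        norm_num
      · rw [Set.indicator_of_notMem h, Set.indicator_of_notMem h, mul_zero]
    rw [setIntegral_congr_fun measurableSet_Ioi this, integral_indicator measurableSet_Ioo,
      Measure.restrict_restrict measurableSet_Ioo]
    have : Ioo a b ∩ Ioi 0 = Ioo a b := inter_eq_left.mpr (fun y hy => ha.trans hy.1)
    rw [this]
    simp [Real.volume_Ioo, ENNReal.toReal_ofReal (by linarith : (0:ℝ) ≤ b - a), hab]
  rw [h2, smul_eq_mul, nsmul_eq_mul]
  push_cast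
  unfold c3aux
  simp only [measureReal_def]
  ring

lemma annulus_integrable_aux (a b : ℝ) (ha : 0 < a) :
    IntegrableOn (fun x : E3aux => ‖x‖ ^ (-(2:ℝ))) {x : E3aux | a < ‖x‖ ∧ ‖x‖ < b} := by
  have hms : MeasurableSet {x : E3aux | a < ‖x‖ ∧ ‖x‖ < b} :=
    (isOpen_Ioo.preimage continuous_norm).measurableSet
  have hfin : volume {x : E3aux | a < ‖x‖ ∧ ‖x‖ < b} < ⊤ := by
    refine lt_of_le_of_lt (measure_mono ?_)
      (measure_ball_lt_top (x := (0:E3aux)) (r := b))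
    intro x hx
    simpa [mem_ball_zero_iff] using hx.2
  have hconst : IntegrableOn (fun _ : E3aux => a ^ (-(2:ℝ))) {x : E3aux | a < ‖x‖ ∧ ‖x‖ < b} :=
    (integrableOn_const_iff).mpr (Or.inr hfin)
  have hcont : ContinuousOn (fun x : E3aux => ‖x‖ ^ (-(2:ℝ))) {x : E3aux | a < ‖x‖ ∧ ‖x‖ < b} :=
    fun x hx => ((Real.continuousAt_rpow_const ‖x‖ _ (Or.inl (ha.trans hx.1).ne')).comp
      continuous_norm.continuousAt).continuousWithinAt
  refine hconst.mono' (hcont.aestronglyMeasurable hms) ?_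
  refine ae_restrict_of_forall_mem hms (fun x hx => ?_)
  rw [Real.norm_eq_abs, abs_of_nonneg (Real.rpow_nonneg (norm_nonneg x) _)]
  exact Real.rpow_le_rpow_of_nonpos ha hx.1.le (by norm_num)

lemma time_integrable_aux (q r₁ : ℝ) (hq : 2 ≤ q) (hr : 0 < r₁) :
    Integrable (fun t : ℝ => (|t| + r₁) ^ (-q)) := by
  have hq1 : -q < -1 := by linarith
  have h1 : IntegrableOn (fun s : ℝ => s ^ (-q)) (Ioi r₁) := integrableOn_Ioi_rpow_of_lt hq1 hr
  have mp : MeasurePreserving (fun t : ℝ => t + r₁) volume volume :=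
    measurePreserving_add_right volume r₁
  have emb : MeasurableEmbedding (fun t : ℝ => t + r₁) :=
    (Homeomorph.addRight r₁).measurableEmbedding
  have hpre : (fun t : ℝ => t + r₁) ⁻¹' (Ioi r₁) = Ioi 0 := by ext z; simp
  have h2 : IntegrableOn (fun t : ℝ => (t + r₁) ^ (-q)) (Ioi 0) := by
    have h3 := (mp.integrableOn_comp_preimage emb (f := fun s : ℝ => s ^ (-q))
      (s := Ioi r₁)).mpr h1
    simp only [Function.comp_def] at h3
    rwa [hpre] at h3
  have hIoi : IntegrableOn (fun t : ℝ => (|t| + r₁) ^ (-q)) (Ioi 0) := by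
    refine h2.congr_fun (fun t ht => ?_) measurableSet_Ioi
    rw [abs_of_pos ht]
  have hIio : IntegrableOn (fun t : ℝ => (|t| + r₁) ^ (-q)) (Iio 0) := by
    have mpn : MeasurePreserving (fun t : ℝ => -t) volume volume :=
      Measure.measurePreserving_neg volume
    have embn : MeasurableEmbedding (fun t : ℝ => -t) :=
      (Homeomorph.neg ℝ).measurableEmbedding
    have hpren : (fun t : ℝ => -t) ⁻¹' (Ioi 0) = Iio 0 := by ext z; simp
    have := (mpn.integrableOn_comp_preimage embn).mpr hIoi
    rw [hpren] at this
    refine this.congr_fun (fun t _ => ?_) measurableSet_Iio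
    simp [Function.comp, abs_neg]
  have h0 : IntegrableOn (fun t : ℝ => (|t| + r₁) ^ (-q)) {0} := by
    rw [IntegrableOn, Measure.restrict_eq_zero.mpr (measure_singleton 0)]
    exact integrable_zero_measure
  have huniv : (Iio (0:ℝ) ∪ Ioi 0) ∪ {0} = univ := by
    ext x
    simp only [mem_union, mem_Iio, mem_Ioi, mem_singleton_iff, mem_univ, iff_true]
    rcases lt_trichotomy x 0 with h | h | h
    · exact Or.inl (Or.inl h)
    · exact Or.inr h
    · exact Or.inl (Or.inr h)
  rw [← integrableOn_univ, ← huniv]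
  exact (hIio.union hIoi).union h0

lemma time_value_aux (q r₁ : ℝ) (hq : 2 ≤ q) (hr : 0 < r₁) :
    ∫ t : ℝ, (|t| + r₁) ^ (-q) = 2 * r₁ ^ (1 - q) / (q - 1) := by
  have hq1 : -q < -1 := by linarith
  have mp : MeasurePreserving (fun t : ℝ => t + r₁) volume volume :=
    measurePreserving_add_right volume r₁
  have emb : MeasurableEmbedding (fun t : ℝ => t + r₁) :=
    (Homeomorph.addRight r₁).measurableEmbedding
  have hpre : (fun t : ℝ => t + r₁) ⁻¹' (Ioi r₁) = Ioi 0 := by ext z; simp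
  have h2 : ∫ t in Ioi (0:ℝ), (t + r₁) ^ (-q) = ∫ s in Ioi r₁, s ^ (-q) := by
    rw [← hpre]
    exact mp.setIntegral_preimage_emb emb (fun s => s ^ (-q)) (Ioi r₁)
  rw [integral_comp_abs (f := fun s => (s + r₁) ^ (-q)), h2, integral_Ioi_rpow_of_lt hq1 hr]
  rw [show -q + 1 = 1 - q by ring, show (1:ℝ) - q = -(q-1) by ring, neg_div_neg_eq,
    mul_div_assoc]

lemma core_aux (u : E3aux → ℝ) (M q r₁ r₂ : ℝ) (hM : 0 ≤ M) (hq : 2 ≤ q)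
    (hr₁ : 1/2 ≤ r₁) (hr : r₁ < r₂)
    (hu : ∀ (a : ℝ) (x : E3aux), 0 < a → a ≤ ‖x‖ →
      u x ^ 2 ≤ M * a ^ (-(2*q)) * ‖x‖ ^ (-(2:ℝ))) :
    L1L2 (channel r₁ r₂) (fun x _ => u x)
      ≤ (3 * c3aux * M) ^ ((1:ℝ)/2) * (r₂ - r₁) ^ ((1:ℝ)/2) * (2 * r₁ ^ (1 - q) / (q - 1)) := by
  have hr₁0 : 0 < r₁ := lt_of_lt_of_le (by norm_num) hr₁
  have hr21 : (0:ℝ) ≤ r₂ - r₁ := by linarith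
  set K : ℝ := (3 * c3aux * M) ^ ((1:ℝ)/2) * (r₂ - r₁) ^ ((1:ℝ)/2) with hK
  have hc3M : (0:ℝ) ≤ 3 * c3aux * M := mul_nonneg (mul_nonneg (by norm_num) c3aux_nonneg) hM
  have hK0 : 0 ≤ K := mul_nonneg (Real.rpow_nonneg hc3M _) (Real.rpow_nonneg hr21 _)
  have hslice : ∀ t : ℝ, {x : E3aux | (x, t) ∈ channel r₁ r₂}
      = {x : E3aux | |t| + r₁ < ‖x‖ ∧ ‖x‖ < |t| + r₂} := fun t => rfl
  have hpt : ∀ t : ℝ, (∫ x in {x : E3aux | (x, t) ∈ channel r₁ r₂}, u x ^ 2) ^ ((1:ℝ)/2)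
      ≤ K * (|t| + r₁) ^ (-q) := by
    intro t
    set a : ℝ := |t| + r₁ with ha'
    set b : ℝ := |t| + r₂ with hb'
    have ha : 0 < a := by positivity
    have hab : a ≤ b := by simp [ha', hb']; linarith
    have hms : MeasurableSet {x : E3aux | a < ‖x‖ ∧ ‖x‖ < b} :=
      ((isOpen_Ioo.preimage continuous_norm) :
        IsOpen {x : E3aux | a < ‖x‖ ∧ ‖x‖ < b}).measurableSet
    have hinner : (∫ x in {x : E3aux | (x, t) ∈ channel r₁ r₂}, u x ^ 2)
        ≤ (M * a ^ (-(2*q))) * (3 * c3aux * (r₂ - r₁)) := by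
      rw [hslice t]
      have hmono : (∫ x in {x : E3aux | a < ‖x‖ ∧ ‖x‖ < b}, u x ^ 2)
          ≤ ∫ x in {x : E3aux | a < ‖x‖ ∧ ‖x‖ < b}, (M * a ^ (-(2*q))) * ‖x‖ ^ (-(2:ℝ)) := by
        refine integral_mono_of_nonneg (Filter.Eventually.of_forall fun x => sq_nonneg _)
          ((annulus_integrable_aux a b ha).const_mul _) ?_
        refine ae_restrict_of_forall_mem hms (fun x hx => ?_)
        have := hu a x ha hx.1.le
        simpa [mul_assoc] using this
      calc (∫ x in {x : E3aux | a < ‖x‖ ∧ ‖x‖ < b}, u x ^ 2)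
          ≤ ∫ x in {x : E3aux | a < ‖x‖ ∧ ‖x‖ < b}, (M * a ^ (-(2*q))) * ‖x‖ ^ (-(2:ℝ)) := hmono
        _ = (M * a ^ (-(2*q))) * ∫ x in {x : E3aux | a < ‖x‖ ∧ ‖x‖ < b}, ‖x‖ ^ (-(2:ℝ)) :=
            integral_const_mul _ _
        _ = (M * a ^ (-(2*q))) * (3 * c3aux * (b - a)) := by rw [annulus_int_aux a b ha hab]
        _ = (M * a ^ (-(2*q))) * (3 * c3aux * (r₂ - r₁)) := by
            congr 2
            simp [ha', hb']
    have hnn : 0 ≤ ∫ x in {x : E3aux | (x, t) ∈ channel r₁ r₂}, u x ^ 2 :=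
      integral_nonneg fun x => sq_nonneg _
    calc (∫ x in {x : E3aux | (x, t) ∈ channel r₁ r₂}, u x ^ 2) ^ ((1:ℝ)/2)
        ≤ ((M * a ^ (-(2*q))) * (3 * c3aux * (r₂ - r₁))) ^ ((1:ℝ)/2) :=
          Real.rpow_le_rpow hnn hinner (by norm_num)
      _ = K * a ^ (-q) := by
          rw [show (M * a ^ (-(2*q))) * (3 * c3aux * (r₂ - r₁))
              = (3 * c3aux * M) * (r₂ - r₁) * (a ^ (-(2*q))) by ring]
          rw [Real.mul_rpow (mul_nonneg hc3M hr21) (Real.rpow_nonneg ha.le _),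
            Real.mul_rpow hc3M hr21, hK]
          rw [← Real.rpow_mul ha.le]
          ring_nf
  have hF : Integrable (fun t : ℝ => K * (|t| + r₁) ^ (-q)) :=
    (time_integrable_aux q r₁ hq hr₁0).const_mul K
  have hnnL : ∀ t : ℝ,
      0 ≤ (∫ x in {x : E3aux | (x, t) ∈ channel r₁ r₂}, u x ^ 2) ^ ((1:ℝ)/2) :=
    fun t => Real.rpow_nonneg (integral_nonneg fun x => sq_nonneg _) _
  have hL : L1L2 (channel r₁ r₂) (fun x _ => u x) ≤ ∫ t : ℝ, K * (|t| + r₁) ^ (-q) := by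
    refine integral_mono_of_nonneg (Filter.Eventually.of_forall hnnL) hF
      (Filter.Eventually.of_forall hpt)
  rw [integral_const_mul, time_value_aux q r₁ hq hr₁0] at hL
  calc L1L2 (channel r₁ r₂) (fun x _ => u x) ≤ K * (2 * r₁ ^ (1-q) / (q-1)) := hL
    _ = (3 * c3aux * M) ^ ((1:ℝ)/2) * (r₂ - r₁) ^ ((1:ℝ)/2) * (2 * r₁ ^ (1-q) / (q-1)) := by
        rw [hK]

lemma W3_nonneg_aux (x : E3aux) : 0 ≤ W3 x := Real.rpow_nonneg (by positivity) _

lemma W3_le_inv_norm_aux (x : E3aux) (hx : 0 < ‖x‖) : W3 x ≤ ‖x‖⁻¹ := by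
  have h1 : W3 x ≤ (‖x‖^2) ^ (-(1:ℝ)/2) :=
    Real.rpow_le_rpow_of_nonpos (by positivity) (by nlinarith) (by norm_num)
  have h2 : (‖x‖^2 : ℝ) ^ (-(1:ℝ)/2) = ‖x‖⁻¹ := by
    rw [← Real.rpow_natCast ‖x‖ 2, ← Real.rpow_mul (norm_nonneg x)]
    norm_num
    exact Real.rpow_neg_one ‖x‖
  rw [← h2]; exact h1

lemma W3_sq_le_aux (y : E3aux) : W3 y ^ 2 ≤ 3 := by
  have hpos : (0:ℝ) < 1/3 + ‖y‖^2 := by positivity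
  have h1 : W3 y ^ 2 = (1/3 + ‖y‖^2)⁻¹ := by
    rw [W3, ← Real.rpow_natCast ((1/3 + ‖y‖^2) ^ (-(1:ℝ)/2)) 2, ← Real.rpow_mul hpos.le]
    norm_num
    exact Real.rpow_neg_one _
  rw [h1]
  calc (1/3 + ‖y‖^2 : ℝ)⁻¹ ≤ ((3:ℝ)⁻¹)⁻¹ := by
        apply inv_anti₀ (by norm_num)
        nlinarith [sq_nonneg ‖y‖]
    _ = 3 := by norm_num

lemma Wlam_sq_le_aux (lam : ℝ) (hlam : 0 < lam) (x : E3aux) :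
    Wlam lam x ^ 2 ≤ 3 * lam⁻¹ := by
  have h1 : Wlam lam x ^ 2 = lam⁻¹ * W3 (lam⁻¹ • x) ^ 2 := by
    rw [Wlam, mul_pow]
    congr 1
    rw [← Real.rpow_natCast (lam ^ (-(1:ℝ)/2)) 2, ← Real.rpow_mul hlam.le]
    norm_num
    exact Real.rpow_neg_one _
  rw [h1, mul_comm (3:ℝ) lam⁻¹]
  exact mul_le_mul_of_nonneg_left (W3_sq_le_aux _) (by positivity)

lemma inv_pow_norm_split_aux (x : E3aux) (hx : 0 < ‖x‖) (m : ℕ) (p : ℝ)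
    (hmk : (m:ℝ) = p + 2) :
    (‖x‖⁻¹) ^ m = ‖x‖ ^ (-p) * ‖x‖ ^ (-(2:ℝ)) := by
  have h1 : (‖x‖⁻¹) ^ m = ‖x‖ ^ (-(m:ℝ)) := by
    rw [← Real.rpow_neg_one ‖x‖, ← Real.rpow_natCast (‖x‖ ^ (-(1:ℝ))) m,
      ← Real.rpow_mul (norm_nonneg x)]
    norm_num
  rw [h1, ← Real.rpow_add hx]
  congr 1
  rw [hmk]
  ring

theorem stmt2 :
    ∃ C : ℝ, 0 < C ∧ ∀ lam r₁ r₂ : ℝ, 1 < lam → 1/2 ≤ r₁ → r₁ < r₂ →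
      L1L2 (channel r₁ r₂) (fun x _ => (W3 x)^4 * Wlam lam x)
        ≤ C * lam ^ (-(1:ℝ)/2) * (r₂ - r₁) ^ ((1:ℝ)/2) * r₁ ^ (-(2:ℝ)) ∧
      L1L2 (channel r₁ r₂) (fun x _ => (W3 x)^3 * (Wlam lam x)^2)
        ≤ C * lam⁻¹ * (r₂ - r₁) ^ ((1:ℝ)/2) * r₁⁻¹ := by
  refine ⟨2 * (27 * c3aux) ^ ((1:ℝ)/2) + (9 * c3aux) ^ ((1:ℝ)/2) + 1, ?_, ?_⟩
  · have h1 : (0:ℝ) ≤ 2 * (27 * c3aux) ^ ((1:ℝ)/2) :=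
      mul_nonneg (by norm_num) (Real.rpow_nonneg (mul_nonneg (by norm_num) c3aux_nonneg) _)
    have h2 : (0:ℝ) ≤ (9 * c3aux) ^ ((1:ℝ)/2) :=
      Real.rpow_nonneg (mul_nonneg (by norm_num) c3aux_nonneg) _
    linarith
  intro lam r₁ r₂ hlam hr₁ hr
  set C : ℝ := 2 * (27 * c3aux) ^ ((1:ℝ)/2) + (9 * c3aux) ^ ((1:ℝ)/2) + 1 with hCdef
  have hlam0 : (0:ℝ) < lam := lt_trans one_pos hlam
  have h27 : (0:ℝ) ≤ 27 * c3aux := mul_nonneg (by norm_num) c3aux_nonneg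
  have h9 : (0:ℝ) ≤ 9 * c3aux := mul_nonneg (by norm_num) c3aux_nonneg
  have hC1 : (9 * c3aux) ^ ((1:ℝ)/2) ≤ C := by
    have := mul_nonneg (by norm_num : (0:ℝ) ≤ 2) (Real.rpow_nonneg h27 ((1:ℝ)/2))
    rw [hCdef]; linarith
  have hC2 : 2 * (27 * c3aux) ^ ((1:ℝ)/2) ≤ C := by
    have := Real.rpow_nonneg h9 ((1:ℝ)/2)
    rw [hCdef]; linarith
  constructor
  · -- first estimate
    have hu1 : ∀ (a : ℝ) (x : E3aux), 0 < a → a ≤ ‖x‖ →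
        ((W3 x)^4 * Wlam lam x) ^ 2 ≤ (3 * lam⁻¹) * a ^ (-(2*(3:ℝ))) * ‖x‖ ^ (-(2:ℝ)) := by
      intro a x ha hax
      have hx : 0 < ‖x‖ := ha.trans_le hax
      have hsplit := inv_pow_norm_split_aux x hx 8 6 (by norm_num)
      calc ((W3 x)^4 * Wlam lam x) ^ 2 = W3 x ^ 8 * Wlam lam x ^ 2 := by ring
        _ ≤ (‖x‖⁻¹) ^ 8 * (3 * lam⁻¹) := by
            refine mul_le_mul (pow_le_pow_left₀ (W3_nonneg_aux x) (W3_le_inv_norm_aux x hx) 8)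
              (Wlam_sq_le_aux lam hlam0 x) (sq_nonneg _) (by positivity)
        _ = ‖x‖ ^ (-(6:ℝ)) * ‖x‖ ^ (-(2:ℝ)) * (3 * lam⁻¹) := by rw [hsplit]
        _ ≤ a ^ (-(6:ℝ)) * ‖x‖ ^ (-(2:ℝ)) * (3 * lam⁻¹) := by
            refine mul_le_mul_of_nonneg_right (mul_le_mul_of_nonneg_right
              (Real.rpow_le_rpow_of_nonpos ha hax (by norm_num))
              (Real.rpow_nonneg (norm_nonneg x) _)) (by positivity)
        _ = (3 * lam⁻¹) * a ^ (-(2*(3:ℝ))) * ‖x‖ ^ (-(2:ℝ)) := by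
            rw [show -(2*(3:ℝ)) = -(6:ℝ) by norm_num]; ring
    have h := core_aux (fun x => (W3 x)^4 * Wlam lam x) (3 * lam⁻¹) 3 r₁ r₂
      (by positivity) (by norm_num) hr₁ hr hu1
    refine le_trans h ?_
    have e1 : (3 * c3aux * (3 * lam⁻¹)) ^ ((1:ℝ)/2)
        = (9 * c3aux) ^ ((1:ℝ)/2) * lam ^ (-(1:ℝ)/2) := by
      rw [show 3 * c3aux * (3 * lam⁻¹) = (9 * c3aux) * lam⁻¹ by ring,
        Real.mul_rpow h9 (inv_nonneg.mpr hlam0.le)]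
      congr 1
      rw [← Real.rpow_neg_one lam, ← Real.rpow_mul hlam0.le]
      norm_num
    have e3 : 2 * r₁ ^ ((1:ℝ) - 3) / ((3:ℝ) - 1) = r₁ ^ (-(2:ℝ)) := by
      rw [show (1:ℝ) - 3 = -(2:ℝ) by norm_num]
      ring
    rw [e1, e3]
    have hnn : (0:ℝ) ≤ lam ^ (-(1:ℝ)/2) * ((r₂ - r₁) ^ ((1:ℝ)/2) * r₁ ^ (-(2:ℝ))) := by
      refine mul_nonneg (Real.rpow_nonneg hlam0.le _)
        (mul_nonneg (Real.rpow_nonneg (by linarith) _) (Real.rpow_nonneg (by linarith) _))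
    calc (9 * c3aux) ^ ((1:ℝ)/2) * lam ^ (-(1:ℝ)/2) * (r₂ - r₁) ^ ((1:ℝ)/2) * r₁ ^ (-(2:ℝ))
        = (9 * c3aux) ^ ((1:ℝ)/2)
            * (lam ^ (-(1:ℝ)/2) * ((r₂ - r₁) ^ ((1:ℝ)/2) * r₁ ^ (-(2:ℝ)))) := by ring
      _ ≤ C * (lam ^ (-(1:ℝ)/2) * ((r₂ - r₁) ^ ((1:ℝ)/2) * r₁ ^ (-(2:ℝ)))) :=
          mul_le_mul_of_nonneg_right hC1 hnn
      _ = C * lam ^ (-(1:ℝ)/2) * (r₂ - r₁) ^ ((1:ℝ)/2) * r₁ ^ (-(2:ℝ)) := by ring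
  · -- second estimate
    have hu2 : ∀ (a : ℝ) (x : E3aux), 0 < a → a ≤ ‖x‖ →
        ((W3 x)^3 * (Wlam lam x)^2) ^ 2
          ≤ (9 * lam⁻¹^2) * a ^ (-(2*(2:ℝ))) * ‖x‖ ^ (-(2:ℝ)) := by
      intro a x ha hax
      have hx : 0 < ‖x‖ := ha.trans_le hax
      have hsplit := inv_pow_norm_split_aux x hx 6 4 (by norm_num)
      calc ((W3 x)^3 * (Wlam lam x)^2) ^ 2 = W3 x ^ 6 * (Wlam lam x ^ 2) ^ 2 := by ring
        _ ≤ (‖x‖⁻¹) ^ 6 * (3 * lam⁻¹) ^ 2 := by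
            refine mul_le_mul (pow_le_pow_left₀ (W3_nonneg_aux x) (W3_le_inv_norm_aux x hx) 6)
              (pow_le_pow_left₀ (sq_nonneg _) (Wlam_sq_le_aux lam hlam0 x) 2)
              (sq_nonneg _) (by positivity)
        _ = ‖x‖ ^ (-(4:ℝ)) * ‖x‖ ^ (-(2:ℝ)) * (9 * lam⁻¹^2) := by rw [hsplit]; ring
        _ ≤ a ^ (-(4:ℝ)) * ‖x‖ ^ (-(2:ℝ)) * (9 * lam⁻¹^2) := by
            refine mul_le_mul_of_nonneg_right (mul_le_mul_of_nonneg_right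
              (Real.rpow_le_rpow_of_nonpos ha hax (by norm_num))
              (Real.rpow_nonneg (norm_nonneg x) _)) (by positivity)
        _ = (9 * lam⁻¹^2) * a ^ (-(2*(2:ℝ))) * ‖x‖ ^ (-(2:ℝ)) := by
            rw [show -(2*(2:ℝ)) = -(4:ℝ) by norm_num]; ring
    have h := core_aux (fun x => (W3 x)^3 * (Wlam lam x)^2) (9 * lam⁻¹^2) 2 r₁ r₂
      (by positivity) (by norm_num) hr₁ hr hu2
    refine le_trans h ?_
    have e1 : (3 * c3aux * (9 * lam⁻¹^2)) ^ ((1:ℝ)/2)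
        = (27 * c3aux) ^ ((1:ℝ)/2) * lam⁻¹ := by
      rw [show 3 * c3aux * (9 * lam⁻¹^2) = (27 * c3aux) * lam⁻¹^2 by ring,
        Real.mul_rpow h27 (by positivity)]
      congr 1
      rw [← Real.rpow_natCast lam⁻¹ 2, ← Real.rpow_mul (inv_nonneg.mpr hlam0.le)]
      norm_num
    have e3 : 2 * r₁ ^ ((1:ℝ) - 2) / ((2:ℝ) - 1) = 2 * r₁⁻¹ := by
      rw [show (1:ℝ) - 2 = -(1:ℝ) by norm_num, Real.rpow_neg_one]
      ring
    rw [e1, e3]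
    have hnn : (0:ℝ) ≤ lam⁻¹ * ((r₂ - r₁) ^ ((1:ℝ)/2) * r₁⁻¹) := by
      have hr₁0 : (0:ℝ) < r₁ := lt_of_lt_of_le (by norm_num) hr₁
      refine mul_nonneg (inv_nonneg.mpr hlam0.le)
        (mul_nonneg (Real.rpow_nonneg (by linarith) _) (inv_nonneg.mpr hr₁0.le))
    calc (27 * c3aux) ^ ((1:ℝ)/2) * lam⁻¹ * (r₂ - r₁) ^ ((1:ℝ)/2) * (2 * r₁⁻¹)
        = (2 * (27 * c3aux) ^ ((1:ℝ)/2)) * (lam⁻¹ * ((r₂ - r₁) ^ ((1:ℝ)/2) * r₁⁻¹)) := by ring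
      _ ≤ C * (lam⁻¹ * ((r₂ - r₁) ^ ((1:ℝ)/2) * r₁⁻¹)) := mul_le_mul_of_nonneg_right hC2 hnn
      _ = C * lam⁻¹ * (r₂ - r₁) ^ ((1:ℝ)/2) * r₁⁻¹ := by ring
end
end

section
/- There is an absolute constant C > 0 such that for every λ > 1 and all real numbers 0 ≤ r₁ < r₂ ≤ 1, one has ‖χ_{Ω_{r₁,r₂}} W⁴·W_λ‖_{L¹L²} ≤ C · λ^(−1/2) · (r₂ − r₁)^(1/2) and ‖χ_{Ω_{r₁,r₂}} W³·W_λ²‖_{L¹L²} ≤ C · λ^(−1) · (r₂ − r₁)^(1/2). -/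
open MeasureTheory Real Set

noncomputable section

lemma W3_sq_le (x : EuclideanSpace ℝ (Fin 3)) (c : ℝ) (hc : 0 ≤ c) (h : c ≤ ‖x‖) :
    (W3 x)^2 ≤ 3 * (1 + c^2)⁻¹ := by
  have hb : (0:ℝ) < 1/3 + ‖x‖^2 := by positivity
  have hW : (W3 x)^2 = (1/3 + ‖x‖^2)⁻¹ := by
    rw [W3, ← Real.rpow_natCast ((1/3 + ‖x‖^2) ^ (-(1:ℝ)/2)) 2, ← Real.rpow_mul hb.le]
    norm_num [Real.rpow_neg_one]
  rw [hW]
  have h1 : (1 + c^2)/3 ≤ 1/3 + ‖x‖^2 := by nlinarith [pow_le_pow_left₀ hc h 2]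
  have h2 : (1/3 + ‖x‖^2)⁻¹ ≤ ((1 + c^2)/3)⁻¹ := by
    apply inv_anti₀ (by positivity) h1
  calc (1/3 + ‖x‖^2)⁻¹ ≤ ((1 + c^2)/3)⁻¹ := h2
    _ = 3 * (1+c^2)⁻¹ := by rw [inv_div]; ring

lemma vol_ball3 (r : ℝ) (hr : 0 ≤ r) :
    volume (Metric.ball (0 : EuclideanSpace ℝ (Fin 3)) r) = ENNReal.ofReal (4/3*π*r^3) := by
  have hgamma : Real.Gamma ((3:ℝ)/2 + 1) = 3/4 * Real.sqrt π := by
    rw [Real.Gamma_add_one (by norm_num)]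
    have h32 : (3:ℝ)/2 = 1/2 + 1 := by norm_num
    rw [h32, Real.Gamma_add_one (by norm_num), Real.Gamma_one_half_eq]; ring
  have hs : (0:ℝ) < Real.sqrt π := Real.sqrt_pos.mpr pi_pos
  rw [EuclideanSpace.volume_ball, Fintype.card_fin, ← ENNReal.ofReal_pow hr,
    ← ENNReal.ofReal_mul (by positivity)]
  congr 1
  have hpi3 : Real.sqrt π ^ 3 = π * Real.sqrt π := by
    rw [pow_succ, Real.sq_sqrt pi_pos.le]
  rw [show ((3:ℕ):ℝ)/2 + 1 = 3/2 + 1 from by norm_num, hgamma, hpi3]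
  field_simp

lemma slice_vol (r₁ r₂ t : ℝ) (h0 : 0 ≤ r₁) (h12 : r₁ < r₂) (h2 : r₂ ≤ 1) :
    volume {x : EuclideanSpace ℝ (Fin 3) | (x, t) ∈ channel r₁ r₂}
      ≤ ENNReal.ofReal (8*π*(r₂-r₁)*(1+t^2)) := by
  have ha : 0 ≤ |t| + r₁ := add_nonneg (abs_nonneg t) h0
  have hab : |t| + r₁ ≤ |t| + r₂ := by linarith
  have hsub : {x : EuclideanSpace ℝ (Fin 3) | (x, t) ∈ channel r₁ r₂} ⊆
      Metric.ball (0 : EuclideanSpace ℝ (Fin 3)) (|t| + r₂) \ Metric.ball 0 (|t| + r₁) := by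
    intro x hx
    obtain ⟨h1, h2'⟩ := hx
    refine ⟨mem_ball_zero_iff.mpr h2', fun hxa => ?_⟩
    exact absurd (mem_ball_zero_iff.mp hxa) (not_lt.mpr h1.le)
  have hkey : 4/3*π*(|t|+r₂)^3 - 4/3*π*(|t|+r₁)^3 ≤ 8*π*(r₂-r₁)*(1+t^2) := by
    have hT : 0 ≤ |t| := abs_nonneg t
    have hT2 : |t|^2 = t^2 := sq_abs t
    have hd : 0 ≤ r₂ - r₁ := sub_nonneg.mpr h12.le
    have hr1 : r₁ ≤ 1 := le_trans h12.le h2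
    have hq : r₁^2 + r₁*r₂ + r₂^2 ≤ 3 := by nlinarith
    have h6 : (|t|+r₂)^3 - (|t|+r₁)^3 ≤ 6*(r₂-r₁)*(1+t^2) := by
      rw [← hT2]
      nlinarith [mul_nonneg hd (sq_nonneg (|t| - 1)),
        mul_nonneg hd (mul_nonneg hT (by linarith : (0:ℝ) ≤ 2 - (r₁ + r₂))),
        mul_nonneg hd (by linarith : (0:ℝ) ≤ 3 - (r₁^2 + r₁*r₂ + r₂^2))]
    nlinarith [mul_le_mul_of_nonneg_left h6 pi_pos.le, pi_pos]
  calc volume {x : EuclideanSpace ℝ (Fin 3) | (x, t) ∈ channel r₁ r₂}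
      ≤ volume (Metric.ball (0 : EuclideanSpace ℝ (Fin 3)) (|t| + r₂) \ Metric.ball 0 (|t| + r₁)) :=
        measure_mono hsub
    _ = volume (Metric.ball (0 : EuclideanSpace ℝ (Fin 3)) (|t| + r₂))
        - volume (Metric.ball (0 : EuclideanSpace ℝ (Fin 3)) (|t| + r₁)) :=
        measure_diff (Metric.ball_subset_ball hab) measurableSet_ball.nullMeasurableSet
          measure_ball_lt_top.ne
    _ = ENNReal.ofReal (4/3*π*(|t|+r₂)^3) - ENNReal.ofReal (4/3*π*(|t|+r₁)^3) := by
        rw [vol_ball3 _ (le_trans ha hab), vol_ball3 _ ha]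
    _ = ENNReal.ofReal (4/3*π*(|t|+r₂)^3 - 4/3*π*(|t|+r₁)^3) :=
        (ENNReal.ofReal_sub _ (by positivity)).symm
    _ ≤ ENNReal.ofReal (8*π*(r₂-r₁)*(1+t^2)) := ENNReal.ofReal_le_ofReal hkey

lemma slice_meas (r₁ r₂ t : ℝ) :
    MeasurableSet {x : EuclideanSpace ℝ (Fin 3) | (x, t) ∈ channel r₁ r₂} := by
  have : {x : EuclideanSpace ℝ (Fin 3) | (x, t) ∈ channel r₁ r₂} =
      {x : EuclideanSpace ℝ (Fin 3) | |t| + r₁ < ‖x‖} ∩ {x | ‖x‖ < |t| + r₂} := rfl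
  rw [this]
  exact ((isOpen_lt continuous_const continuous_norm).inter
    (isOpen_lt continuous_norm continuous_const)).measurableSet

lemma key_bound (r₁ r₂ B : ℝ) (h0 : 0 ≤ r₁) (h12 : r₁ < r₂) (h2 : r₂ ≤ 1) (hB : 0 ≤ B)
    (u : EuclideanSpace ℝ (Fin 3) → ℝ)
    (hu : ∀ (t : ℝ) (x : EuclideanSpace ℝ (Fin 3)), |t| ≤ ‖x‖ →
      (u x)^2 ≤ 243 * B * ((1+t^2)^3)⁻¹) :
    L1L2 (channel r₁ r₂) (fun x _ => u x)
      ≤ (π * Real.sqrt (1944*π)) * Real.sqrt B * (r₂ - r₁) ^ ((1:ℝ)/2) := by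
  set Q : ℝ := 1944*π*B*(r₂-r₁) with hQdef
  have hQ : 0 ≤ Q := by
    apply mul_nonneg (mul_nonneg (by positivity) hB) (by linarith)
  have hI0 : ∀ t : ℝ, 0 ≤ ∫ x in {x : EuclideanSpace ℝ (Fin 3) | (x, t) ∈ channel r₁ r₂}, (u x)^2 :=
    fun t => setIntegral_nonneg (slice_meas r₁ r₂ t) (fun x _ => sq_nonneg _)
  have hpt : ∀ t : ℝ,
      (∫ x in {x : EuclideanSpace ℝ (Fin 3) | (x, t) ∈ channel r₁ r₂}, (u x)^2) ^ ((1:ℝ)/2)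
        ≤ Real.sqrt Q * (1+t^2)⁻¹ := by
    intro t
    have h1t : (0:ℝ) < 1 + t^2 := by positivity
    have hvol := slice_vol r₁ r₂ t h0 h12 h2
    have hfin : volume {x : EuclideanSpace ℝ (Fin 3) | (x, t) ∈ channel r₁ r₂} < ⊤ :=
      lt_of_le_of_lt hvol ENNReal.ofReal_lt_top
    have hC : ∀ x ∈ {x : EuclideanSpace ℝ (Fin 3) | (x, t) ∈ channel r₁ r₂},
        ‖(u x)^2‖ ≤ 243 * B * ((1+t^2)^3)⁻¹ := by
      intro x hx
      rw [Real.norm_eq_abs, abs_of_nonneg (sq_nonneg _)]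
      exact hu t x (le_trans (by linarith [abs_nonneg t] : |t| ≤ |t| + r₁) hx.1.le)
    have hI : (∫ x in {x : EuclideanSpace ℝ (Fin 3) | (x, t) ∈ channel r₁ r₂}, (u x)^2)
        ≤ (243 * B * ((1+t^2)^3)⁻¹) *
          (volume {x : EuclideanSpace ℝ (Fin 3) | (x, t) ∈ channel r₁ r₂}).toReal :=
      le_trans (le_abs_self _)
        (norm_setIntegral_le_of_norm_le_const hfin hC)
    have htvol : (volume {x : EuclideanSpace ℝ (Fin 3) | (x, t) ∈ channel r₁ r₂}).toReal
        ≤ 8*π*(r₂-r₁)*(1+t^2) :=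
      ENNReal.toReal_le_of_le_ofReal
        (mul_nonneg (mul_nonneg (by positivity) (by linarith)) (by positivity)) hvol
    have hI2 : (∫ x in {x : EuclideanSpace ℝ (Fin 3) | (x, t) ∈ channel r₁ r₂}, (u x)^2)
        ≤ Q * ((1+t^2)^2)⁻¹ := by
      refine hI.trans ?_
      have hm := mul_le_mul_of_nonneg_left htvol
        (show (0:ℝ) ≤ 243 * B * ((1+t^2)^3)⁻¹ by positivity)
      refine hm.trans_eq ?_
      rw [hQdef]
      field_simp
      ring
    calc (∫ x in {x : EuclideanSpace ℝ (Fin 3) | (x, t) ∈ channel r₁ r₂}, (u x)^2) ^ ((1:ℝ)/2)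
        ≤ (Q * ((1+t^2)^2)⁻¹) ^ ((1:ℝ)/2) := Real.rpow_le_rpow (hI0 t) hI2 (by norm_num)
      _ = Real.sqrt (Q * ((1+t^2)^2)⁻¹) := (Real.sqrt_eq_rpow _).symm
      _ = Real.sqrt Q * (1+t^2)⁻¹ := by
          rw [Real.sqrt_mul hQ, Real.sqrt_inv, Real.sqrt_sq h1t.le]
  have hint : Integrable (fun t : ℝ => Real.sqrt Q * (1+t^2)⁻¹) :=
    integrable_inv_one_add_sq.const_mul _
  have hmain : L1L2 (channel r₁ r₂) (fun x _ => u x) ≤ ∫ t : ℝ, Real.sqrt Q * (1+t^2)⁻¹ := by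
    refine integral_mono_of_nonneg ?_ hint ?_
    · filter_upwards with t
      exact Real.rpow_nonneg (hI0 t) _
    · filter_upwards with t
      exact hpt t
  refine hmain.trans ?_
  rw [MeasureTheory.integral_const_mul, integral_univ_inv_one_add_sq, hQdef,
    show (1944:ℝ)*π*B*(r₂-r₁) = (1944*π)*(B*(r₂-r₁)) from by ring,
    Real.sqrt_mul (by positivity), Real.sqrt_mul hB, ← Real.sqrt_eq_rpow]
  exact le_of_eq (by ring)

lemma W3_sq_le' (x : EuclideanSpace ℝ (Fin 3)) : (W3 x)^2 ≤ 3 := by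
  have := W3_sq_le x 0 le_rfl (norm_nonneg x)
  norm_num at this
  exact this

lemma rpow_half_sq (lam : ℝ) (hlam : 0 < lam) : (lam ^ (-(1:ℝ)/2))^2 = lam⁻¹ := by
  rw [← Real.rpow_natCast (lam ^ (-(1:ℝ)/2)) 2, ← Real.rpow_mul hlam.le]
  norm_num [Real.rpow_neg_one]

lemma Wlam_sq_le (lam : ℝ) (x : EuclideanSpace ℝ (Fin 3)) (hlam : 0 < lam) :
    (Wlam lam x)^2 ≤ 3 * lam⁻¹ := by
  have h1 : (Wlam lam x)^2 = (lam ^ (-(1:ℝ)/2))^2 * (W3 (lam⁻¹ • x))^2 := by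
    rw [Wlam]; ring
  rw [h1, rpow_half_sq lam hlam]
  have h2 := W3_sq_le' (lam⁻¹ • x)
  calc lam⁻¹ * (W3 (lam⁻¹ • x))^2 ≤ lam⁻¹ * 3 :=
        mul_le_mul_of_nonneg_left h2 (inv_nonneg.mpr hlam.le)
    _ = 3 * lam⁻¹ := by ring

theorem stmt3 :
    ∃ C : ℝ, 0 < C ∧ ∀ lam r₁ r₂ : ℝ, 1 < lam → 0 ≤ r₁ → r₁ < r₂ → r₂ ≤ 1 →
      L1L2 (channel r₁ r₂) (fun x _ => (W3 x)^4 * Wlam lam x)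
        ≤ C * lam ^ (-(1:ℝ)/2) * (r₂ - r₁) ^ ((1:ℝ)/2) ∧
      L1L2 (channel r₁ r₂) (fun x _ => (W3 x)^3 * (Wlam lam x)^2)
        ≤ C * lam⁻¹ * (r₂ - r₁) ^ ((1:ℝ)/2) := by
  refine ⟨π * Real.sqrt (1944*π), by positivity, fun lam r₁ r₂ hlam h0 h12 h2 => ?_⟩
  have hlam0 : (0:ℝ) < lam := lt_trans one_pos hlam
  have hinv : (0:ℝ) ≤ lam⁻¹ := inv_nonneg.mpr hlam0.le
  have hv : ∀ (t : ℝ) (x : EuclideanSpace ℝ (Fin 3)), |t| ≤ ‖x‖ →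
      (W3 x)^2 ≤ 3*(1+t^2)⁻¹ := by
    intro t x h
    have := W3_sq_le x |t| (abs_nonneg t) h
    rwa [sq_abs] at this
  have hinvle : ∀ t : ℝ, (1+t^2)⁻¹ ≤ 1 := by
    intro t
    have h' : (1+t^2)⁻¹ ≤ (1:ℝ)⁻¹ := inv_anti₀ one_pos (by nlinarith [sq_nonneg t])
    rwa [inv_one] at h'
  constructor
  · have h1 := key_bound r₁ r₂ lam⁻¹ h0 h12 h2 hinv (fun x => (W3 x)^4 * Wlam lam x) ?_
    · have hsq : Real.sqrt lam⁻¹ = lam ^ (-(1:ℝ)/2) := by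
        rw [show (-(1:ℝ)/2) = -((1:ℝ)/2) from by ring, Real.rpow_neg hlam0.le,
          ← Real.sqrt_eq_rpow, Real.sqrt_inv]
      rwa [hsq] at h1
    · intro t x h
      have hW := hv t x h
      have hW4 := pow_le_pow_left₀ (sq_nonneg (W3 x)) hW 4
      have hWl := Wlam_sq_le lam x hlam0
      have h1t : (0:ℝ) < 1+t^2 := by positivity
      calc ((W3 x)^4 * Wlam lam x)^2 = ((W3 x)^2)^4 * (Wlam lam x)^2 := by ring
        _ ≤ (3*(1+t^2)⁻¹)^4 * (3*lam⁻¹) :=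
            mul_le_mul hW4 hWl (sq_nonneg _) (by positivity)
        _ = (243*lam⁻¹*((1+t^2)^3)⁻¹) * (1+t^2)⁻¹ := by field_simp; ring
        _ ≤ (243*lam⁻¹*((1+t^2)^3)⁻¹) * 1 :=
            mul_le_mul_of_nonneg_left (hinvle t) (by positivity)
        _ = 243*lam⁻¹*((1+t^2)^3)⁻¹ := mul_one _
  · have h1 := key_bound r₁ r₂ (lam⁻¹^2) h0 h12 h2 (by positivity)
        (fun x => (W3 x)^3 * (Wlam lam x)^2) ?_
    · rwa [Real.sqrt_sq hinv] at h1
    · intro t x h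
      have hW := hv t x h
      have hWl := Wlam_sq_le lam x hlam0
      have h1t : (0:ℝ) < 1+t^2 := by positivity
      calc ((W3 x)^3 * (Wlam lam x)^2)^2 = ((W3 x)^2)^3 * ((Wlam lam x)^2)^2 := by ring
        _ ≤ (3*(1+t^2)⁻¹)^3 * (3*lam⁻¹)^2 :=
            mul_le_mul (pow_le_pow_left₀ (sq_nonneg _) hW 3)
              (pow_le_pow_left₀ (sq_nonneg _) hWl 2)
              (pow_nonneg (sq_nonneg _) 2) (by positivity)
        _ = 243*lam⁻¹^2*((1+t^2)^3)⁻¹ := by field_simp; ring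
end
end

section
/- There is an absolute constant C > 0 such that for every λ > 1 and all real numbers 0 ≤ r₁ < r₂ ≤ λ, one has ‖χ_{Ω_{r₁,r₂}} W·W_λ⁴‖_{L¹L²} ≤ C · λ^(−1) · (r₂ − r₁)^(1/2). -/
open MeasureTheory Real Set

noncomputable section

section auxStmt4

open Metric

local notation "E3" => EuclideanSpace ℝ (Fin 3)

lemma W3_cont : Continuous W3 := by
  unfold W3
  apply Continuous.rpow_const (by continuity)
  intro x; left; positivity

lemma Wlam_cont (lam : ℝ) : Continuous (Wlam lam) :=
  continuous_const.mul (W3_cont.comp (continuous_const_smul _))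

lemma W3_sq (x : E3) : (W3 x)^2 = (1/3 + ‖x‖^2)⁻¹ := by
  have h : (0:ℝ) ≤ 1/3 + ‖x‖^2 := by positivity
  rw [W3, ← Real.rpow_natCast (((1:ℝ)/3 + ‖x‖^2) ^ (-(1:ℝ)/2)) 2, ← Real.rpow_mul h]
  norm_num [Real.rpow_neg_one]

lemma Wlam_sq {lam : ℝ} (hlam : 0 < lam) (x : E3) :
    (Wlam lam x)^2 = lam⁻¹ * (1/3 + (‖x‖/lam)^2)⁻¹ := by
  have h1 : (lam ^ (-(1:ℝ)/2))^2 = lam⁻¹ := by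
    rw [← Real.rpow_natCast (lam ^ (-(1:ℝ)/2)) 2, ← Real.rpow_mul hlam.le]
    norm_num [Real.rpow_neg_one]
  have h2 : ‖lam⁻¹ • x‖ = ‖x‖/lam := by
    rw [norm_smul, norm_inv, Real.norm_eq_abs, abs_of_pos hlam, div_eq_inv_mul]
  rw [Wlam, mul_pow, h1, W3_sq, h2]

lemma pointwise_bound {lam t : ℝ} (hlam : 1 < lam) {x : E3} (hx : |t| < ‖x‖) :
    (W3 x * (Wlam lam x)^4)^2 ≤ (‖x‖^2)⁻¹ * (36 / (lam^2 + t^2))^2 := by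
  have hρ : 0 < ‖x‖ := (abs_nonneg t).trans_lt hx
  have hlam0 : (0:ℝ) < lam := by linarith
  set ρ := ‖x‖ with hρdef
  have hrw : (W3 x * (Wlam lam x)^4)^2 = (W3 x)^2 * ((Wlam lam x)^2)^4 := by ring
  rw [hrw, W3_sq, Wlam_sq hlam0]
  have hq0 : (0:ℝ) < 1/3 + (ρ/lam)^2 := by positivity
  have h1 : (1/3 + ρ^2)⁻¹ ≤ (ρ^2)⁻¹ := by
    apply inv_anti₀ (by positivity); linarith
  have key : (lam⁻¹ * (1/3 + (ρ/lam)^2)⁻¹)^4 ≤ (36 / (lam^2 + t^2))^2 := by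
    rcases le_or_gt |t| lam with ht | ht
    · have hq : (1/3 + (ρ/lam)^2)⁻¹ ≤ 3 := by
        rw [inv_le_comm₀ (by positivity) (by norm_num)]
        nlinarith [sq_nonneg (ρ/lam)]
      have hL : (lam⁻¹ * (1/3 + (ρ/lam)^2)⁻¹)^4 ≤ (lam⁻¹*3)^4 :=
        pow_le_pow_left₀ (by positivity)
          (mul_le_mul_of_nonneg_left hq (by positivity)) 4
      refine hL.trans ?_
      have hR : 18/lam^2 ≤ 36/(lam^2+t^2) := by
        rw [div_le_div_iff₀ (by positivity) (by positivity)]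
        nlinarith [abs_nonneg t, sq_abs t]
      have h9 : (lam⁻¹*3)^4 ≤ (18/lam^2)^2 := by
        have e : (lam⁻¹*3)^4 = 81/lam^4 := by field_simp; ring
        rw [e, div_pow, div_le_div_iff₀ (by positivity) (by positivity)]
        nlinarith [pow_pos hlam0 4]
      exact h9.trans (pow_le_pow_left₀ (by positivity) hR 2)
    · have htρ : lam < ρ := ht.trans hx
      have ht2 : lam^2 < t^2 := by nlinarith [sq_abs t, abs_nonneg t]
      have ht0 : (0:ℝ) < t^2 := by nlinarith
      have htρ2 : t^2 < ρ^2 := by nlinarith [sq_abs t, abs_nonneg t]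
      have hq : (1/3 + (ρ/lam)^2)⁻¹ ≤ lam^2/ρ^2 := by
        rw [inv_le_comm₀ (by positivity) (by positivity), inv_div, div_pow]
        linarith
      have hL : (lam⁻¹ * (1/3 + (ρ/lam)^2)⁻¹)^4 ≤ (lam⁻¹*(lam^2/ρ^2))^4 :=
        pow_le_pow_left₀ (by positivity)
          (mul_le_mul_of_nonneg_left hq (by positivity)) 4
      refine hL.trans ?_
      have e : (lam⁻¹*(lam^2/ρ^2))^4 = lam^4/ρ^8 := by field_simp
      rw [e]
      have hR : 18/t^2 ≤ 36/(lam^2+t^2) := by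
        rw [div_le_div_iff₀ (by positivity) (by positivity)]; nlinarith
      have h9 : lam^4/ρ^8 ≤ (18/t^2)^2 := by
        rw [div_pow, div_le_div_iff₀ (by positivity) (by positivity)]
        have hl4 : lam^4 ≤ t^4 := by
          calc lam^4 = (lam^2)^2 := by ring
          _ ≤ (t^2)^2 := pow_le_pow_left₀ (by positivity) ht2.le 2
          _ = t^4 := by ring
        have h8 : (t^2)^4 ≤ (ρ^2)^4 := pow_le_pow_left₀ (by positivity) htρ2.le 4
        have hfin : lam^4 * (t^2)^2 ≤ (t^2)^4 := by
          calc lam^4 * (t^2)^2 ≤ t^4 * (t^2)^2 :=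
                mul_le_mul_of_nonneg_right hl4 (by positivity)
          _ = (t^2)^4 := by ring
        have he : (ρ^2)^4 = ρ^8 := by ring
        have hnn : (0:ℝ) ≤ ρ^8 := by positivity
        linarith
      exact h9.trans (pow_le_pow_left₀ (by positivity) hR 2)
  exact mul_le_mul h1 key (by positivity) (by positivity)

lemma annulus_integral (a d : ℝ) (ha : 0 < a) (hd : 0 < d) :
    ∫ x in {x : E3 | ‖x‖ ∈ Ioo a (a+d)}, (‖x‖^2)⁻¹
      = 3 * (volume (ball (0:E3) 1)).toReal * d := by
  have hmeas : MeasurableSet {x : E3 | ‖x‖ ∈ Ioo a (a+d)} :=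
    measurable_norm measurableSet_Ioo
  set f : ℝ → ℝ := (Ioo a (a+d)).indicator (fun y => (y^2)⁻¹) with hf
  have h1 : ∫ x in {x : E3 | ‖x‖ ∈ Ioo a (a+d)}, (‖x‖^2)⁻¹ = ∫ x : E3, f ‖x‖ := by
    have hpt : ∀ x : E3, ({x : E3 | ‖x‖ ∈ Ioo a (a+d)}).indicator
        (fun x => (‖x‖^2)⁻¹) x = f ‖x‖ := by
      intro x
      simp only [hf, Set.indicator_apply, Set.mem_setOf_eq]
    rw [← integral_indicator hmeas]
    simp only [hpt]
  rw [h1, MeasureTheory.integral_fun_norm_addHaar volume f]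
  have hdim : Module.finrank ℝ E3 = 3 := finrank_euclideanSpace_fin
  rw [hdim]
  have h2 : ∫ y in Ioi (0:ℝ), y ^ (3-1) • f y = d := by
    have he : ∀ y : ℝ, y ^ (3-1) • f y
        = (Ioo a (a+d)).indicator (fun y => y^2 * (y^2)⁻¹) y := by
      intro y
      by_cases hy : y ∈ Ioo a (a+d) <;> simp [hf, Set.indicator, hy]
    simp only [he]
    rw [setIntegral_indicator measurableSet_Ioo]
    have hinter : Ioi (0:ℝ) ∩ Ioo a (a+d) = Ioo a (a+d) :=
      Set.inter_eq_self_of_subset_right (fun y hy => ha.trans hy.1)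
    rw [hinter]
    have : ∫ y in Ioo a (a+d), y^2 * (y^2)⁻¹ = ∫ y in Ioo a (a+d), (1:ℝ) := by
      apply setIntegral_congr_fun measurableSet_Ioo
      intro y hy
      have : y ≠ 0 := by have := ha.trans hy.1; positivity
      field_simp
    rw [this, setIntegral_const, measureReal_def, Real.volume_Ioo, smul_eq_mul, mul_one,
      ENNReal.toReal_ofReal (by linarith)]
    ring
  rw [h2, nsmul_eq_mul, smul_eq_mul]
  push_cast
  rw [measureReal_def]
  ring

lemma integrableOn_inv_annulus {a d : ℝ} (ha : 0 < a) (_hd : 0 < d) :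
    IntegrableOn (fun x : E3 => (‖x‖^2)⁻¹) {x : E3 | ‖x‖ ∈ Ioo a (a+d)} := by
  have hK : IsCompact (closedBall (0:E3) (a+d) ∩ {x : E3 | a ≤ ‖x‖}) :=
    (isCompact_closedBall _ _).inter_right
      (isClosed_le continuous_const continuous_norm)
  have hsub : {x : E3 | ‖x‖ ∈ Ioo a (a+d)}
      ⊆ closedBall (0:E3) (a+d) ∩ {x : E3 | a ≤ ‖x‖} :=
    fun x hx => ⟨mem_closedBall_zero_iff.2 hx.2.le, hx.1.le⟩
  refine (ContinuousOn.integrableOn_compact hK ?_).mono_set hsub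
  refine ((continuous_norm.pow 2).continuousOn).inv₀ ?_
  intro x hx
  have h : a ≤ ‖x‖ := hx.2
  have h0 : (0:ℝ) < ‖x‖ := lt_of_lt_of_le ha h
  exact pow_ne_zero 2 h0.ne'

lemma integrableOn_Fsq (lam : ℝ) {a d : ℝ} :
    IntegrableOn (fun x : E3 => (W3 x * (Wlam lam x)^4)^2)
      {x : E3 | ‖x‖ ∈ Ioo a (a+d)} := by
  have hc : Continuous fun x : E3 => (W3 x * (Wlam lam x)^4)^2 :=
    (W3_cont.mul ((Wlam_cont lam).pow 4)).pow 2
  have hsub : {x : E3 | ‖x‖ ∈ Ioo a (a+d)} ⊆ closedBall (0:E3) (a+d) :=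
    fun x hx => mem_closedBall_zero_iff.2 hx.2.le
  exact (hc.continuousOn.integrableOn_compact (isCompact_closedBall _ _)).mono_set hsub

end auxStmt4

theorem stmt4 :
    ∃ C : ℝ, 0 < C ∧ ∀ lam r₁ r₂ : ℝ, 1 < lam → 0 ≤ r₁ → r₁ < r₂ → r₂ ≤ lam →
      L1L2 (channel r₁ r₂) (fun x _ => W3 x * (Wlam lam x)^4)
        ≤ C * lam⁻¹ * (r₂ - r₁) ^ ((1:ℝ)/2) := by
  classical
  set vb := (volume (Metric.ball (0:EuclideanSpace ℝ (Fin 3)) 1)).toReal with hvb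
  have hvb0 : 0 < vb :=
    ENNReal.toReal_pos (Metric.measure_ball_pos volume 0 one_pos).ne'
      measure_ball_lt_top.ne
  refine ⟨36 * π * Real.sqrt (3 * vb), by positivity, ?_⟩
  intro lam r₁ r₂ hlam hr₁ hr h2
  have hlam0 : (0:ℝ) < lam := by linarith
  set d := r₂ - r₁ with hdd
  have hd : 0 < d := by rw [hdd]; linarith
  have claim : ∀ t : ℝ, t ≠ 0 →
      (∫ x in {x : EuclideanSpace ℝ (Fin 3) | (x, t) ∈ channel r₁ r₂},
          (W3 x * (Wlam lam x)^4)^2) ^ ((1:ℝ)/2)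
        ≤ Real.sqrt (3*vb*d) * (36 / (lam^2 + t^2)) := by
    intro t ht
    set a := |t| + r₁ with haa
    have ha : 0 < a := by
      have := abs_pos.2 ht
      rw [haa]; linarith
    have hset : {x : EuclideanSpace ℝ (Fin 3) | (x, t) ∈ channel r₁ r₂}
        = {x : EuclideanSpace ℝ (Fin 3) | ‖x‖ ∈ Ioo a (a+d)} := by
      ext x
      simp only [channel, Set.mem_setOf_eq, Set.mem_Ioo, haa, hdd]
      constructor <;> rintro ⟨u, v⟩ <;> constructor <;> linarith
    rw [hset]
    have hmeas : MeasurableSet {x : EuclideanSpace ℝ (Fin 3) | ‖x‖ ∈ Ioo a (a+d)} :=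
      measurable_norm measurableSet_Ioo
    have hmono : (∫ x in {x : EuclideanSpace ℝ (Fin 3) | ‖x‖ ∈ Ioo a (a+d)},
          (W3 x * (Wlam lam x)^4)^2)
        ≤ ∫ x in {x : EuclideanSpace ℝ (Fin 3) | ‖x‖ ∈ Ioo a (a+d)},
            (‖x‖^2)⁻¹ * (36/(lam^2+t^2))^2 := by
      apply setIntegral_mono_on (integrableOn_Fsq lam)
        ((integrableOn_inv_annulus ha hd).mul_const _) hmeas
      intro x hx
      have hx' : a < ‖x‖ ∧ ‖x‖ < a + d := hx
      have hx1 : |t| < ‖x‖ := by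
        have : |t| ≤ a := by rw [haa]; linarith
        linarith [hx'.1]
      exact pointwise_bound hlam hx1
    have hval : ∫ x in {x : EuclideanSpace ℝ (Fin 3) | ‖x‖ ∈ Ioo a (a+d)},
          (‖x‖^2)⁻¹ * (36/(lam^2+t^2))^2
        = (3*vb*d) * (36/(lam^2+t^2))^2 := by
      rw [integral_mul_const, annulus_integral a d ha hd, ← hvb]
    have hnn : 0 ≤ ∫ x in {x : EuclideanSpace ℝ (Fin 3) | ‖x‖ ∈ Ioo a (a+d)},
        (W3 x * (Wlam lam x)^4)^2 :=
      setIntegral_nonneg hmeas (fun x _ => by positivity)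
    calc (∫ x in {x : EuclideanSpace ℝ (Fin 3) | ‖x‖ ∈ Ioo a (a+d)},
          (W3 x * (Wlam lam x)^4)^2) ^ ((1:ℝ)/2)
        ≤ ((3*vb*d) * (36/(lam^2+t^2))^2) ^ ((1:ℝ)/2) :=
          Real.rpow_le_rpow hnn (hmono.trans_eq hval) (by norm_num)
      _ = Real.sqrt (3*vb*d) * (36/(lam^2+t^2)) := by
          rw [← Real.sqrt_eq_rpow, Real.sqrt_mul (by positivity),
            Real.sqrt_sq (by positivity)]
  simp only [L1L2]
  have hInt : Integrable (fun t : ℝ => Real.sqrt (3*vb*d) * (36 / (lam^2 + t^2))) := by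
    have h0 : Integrable (fun t : ℝ => (1 + (t/lam)^2)⁻¹) :=
      integrable_inv_one_add_sq.comp_div hlam0.ne'
    have h1 : (fun t : ℝ => Real.sqrt (3*vb*d) * (36/(lam^2+t^2)))
        = fun t => (Real.sqrt (3*vb*d) * 36 * (lam^2)⁻¹) * (1 + (t/lam)^2)⁻¹ := by
      funext t
      have hpos : (0:ℝ) < lam^2 + t^2 := by positivity
      field_simp
    rw [h1]
    exact h0.const_mul _
  have hle : (∫ t : ℝ, (∫ x in {x : EuclideanSpace ℝ (Fin 3) | (x, t) ∈ channel r₁ r₂},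
        (W3 x * (Wlam lam x)^4)^2) ^ ((1:ℝ)/2))
      ≤ ∫ t : ℝ, Real.sqrt (3*vb*d) * (36 / (lam^2 + t^2)) := by
    apply integral_mono_of_nonneg _ hInt
    · have hae : ∀ᵐ t : ℝ, t ≠ 0 := by
        rw [ae_iff]
        have : {t : ℝ | ¬ t ≠ 0} = {0} := by ext s; simp
        rw [this]
        exact measure_singleton 0
      filter_upwards [hae] with t ht
      exact claim t ht
    · filter_upwards with t
      exact Real.rpow_nonneg (integral_nonneg (fun x => by positivity)) _
  refine hle.trans ?_
  have hval2 : ∫ t : ℝ, Real.sqrt (3*vb*d) * (36 / (lam^2 + t^2))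
      = Real.sqrt (3*vb*d) * 36 * (lam^2)⁻¹ * (lam * π) := by
    have h1 : (fun t : ℝ => Real.sqrt (3*vb*d) * (36/(lam^2+t^2)))
        = fun t => (Real.sqrt (3*vb*d) * 36 * (lam^2)⁻¹)
            * ((fun s : ℝ => (1+s^2)⁻¹) (t/lam)) := by
      funext t
      have hpos : (0:ℝ) < lam^2 + t^2 := by positivity
      field_simp
    rw [h1, integral_const_mul, MeasureTheory.Measure.integral_comp_div (fun s : ℝ => (1+s^2)⁻¹) lam,
      integral_univ_inv_one_add_sq, smul_eq_mul, abs_of_pos hlam0]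
  rw [hval2]
  apply le_of_eq
  rw [show (3*vb*d) = (3*vb)*d by ring, Real.sqrt_mul (by positivity) d,
    Real.sqrt_eq_rpow d]
  field_simp
end
end

section
/- There is an absolute constant C > 0 such that for every λ ≥ 2 and all real numbers 0 ≤ r₁ < r₂ ≤ λ, one has ‖χ_{Ω_{r₁,r₂}} W⁴·(W_λ − √3·λ^(−1/2))‖_{L¹L²} ≤ C · (r₂ − r₁)^(1/2) · λ^(−5/2) · ln λ. -/
open MeasureTheory Real Set

noncomputable section

namespace Aux6

abbrev E3 := EuclideanSpace ℝ (Fin 3)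

/-- radial profile of the squared integrand -/
def Q (lam y : ℝ) : ℝ :=
  ((1/3 + y^2)^4)⁻¹ * (lam⁻¹ * ((Real.sqrt (1/3 + (y/lam)^2))⁻¹ - Real.sqrt 3)^2)

lemma Q_nonneg {lam : ℝ} (hl : 0 < lam) (y : ℝ) : 0 ≤ Q lam y := by
  unfold Q; positivity

lemma rpow_half_eq (a : ℝ) (ha : 0 ≤ a) : a ^ (-(1:ℝ)/2) = (Real.sqrt a)⁻¹ := by
  rw [show (-(1:ℝ)/2) = -(1/2) by norm_num, Real.rpow_neg ha, Real.sqrt_eq_rpow]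

lemma rpow_neg3 {t : ℝ} (ht : 0 < t) : t ^ (-3:ℝ) = (t^3)⁻¹ := by
  rw [show (-3:ℝ) = -((3:ℕ):ℝ) by norm_num, Real.rpow_neg ht.le, Real.rpow_natCast]

lemma W3_eq (x : E3) : W3 x = (Real.sqrt (1/3 + ‖x‖^2))⁻¹ := by
  unfold W3; exact rpow_half_eq _ (by positivity)

lemma Q_eq (lam : ℝ) (hl : 0 < lam) (x : E3) :
    ((W3 x)^4 * (Wlam lam x - Real.sqrt 3 * lam ^ (-(1:ℝ)/2)))^2 = Q lam ‖x‖ := by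
  have hnorm : ‖lam⁻¹ • x‖ = ‖x‖ / lam := by
    rw [norm_smul, norm_inv, Real.norm_eq_abs, abs_of_pos hl, div_eq_inv_mul]
  have h3 : (0:ℝ) < 1/3 + ‖x‖^2 := by positivity
  have hsq : Real.sqrt (1/3 + ‖x‖^2) ^ 2 = 1/3 + ‖x‖^2 := Real.sq_sqrt h3.le
  have hsl : Real.sqrt lam ^ 2 = lam := Real.sq_sqrt hl.le
  have key : ∀ A B L c : ℝ,
      ((A⁻¹)^4 * (L⁻¹ * B - c * L⁻¹))^2 = ((A^2)^4)⁻¹ * ((L^2)⁻¹ * (B - c)^2) := by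
    intros A B L c
    have e1 : ((A^2)^4 : ℝ)⁻¹ = (A⁻¹)^8 := by rw [← pow_mul, ← inv_pow]
    have e2 : ((L^2 : ℝ))⁻¹ = (L⁻¹)^2 := (inv_pow L 2).symm
    rw [e1, e2]; ring
  unfold Wlam Q
  rw [W3_eq, W3_eq, hnorm, rpow_half_eq lam hl.le, key, hsq, hsl]

lemma sqrt13 : Real.sqrt (1/3) = (Real.sqrt 3)⁻¹ := by
  rw [show (1/3 : ℝ) = (3:ℝ)⁻¹ by norm_num, Real.sqrt_inv]

lemma w_pos {s : ℝ} (hs : 0 ≤ s) : 0 < (Real.sqrt (1/3 + s))⁻¹ := by positivity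

lemma w_le {s : ℝ} (hs : 0 ≤ s) : (Real.sqrt (1/3 + s))⁻¹ ≤ Real.sqrt 3 := by
  have h1 : Real.sqrt (1/3) ≤ Real.sqrt (1/3 + s) := Real.sqrt_le_sqrt (by linarith)
  have h2 : (0:ℝ) < Real.sqrt (1/3) := Real.sqrt_pos.2 (by norm_num)
  calc (Real.sqrt (1/3 + s))⁻¹ ≤ (Real.sqrt (1/3))⁻¹ := inv_anti₀ h2 h1
    _ = Real.sqrt 3 := by rw [sqrt13, inv_inv]

lemma diff_sq_le_three {s : ℝ} (hs : 0 ≤ s) :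
    ((Real.sqrt (1/3 + s))⁻¹ - Real.sqrt 3)^2 ≤ 3 := by
  have h1 := w_pos hs
  have h2 := w_le hs
  have h3 : Real.sqrt 3 ^ 2 = 3 := Real.sq_sqrt (by norm_num)
  nlinarith [Real.sqrt_nonneg 3]

lemma diff_le_quad {s : ℝ} (hs : 0 ≤ s) :
    Real.sqrt 3 - (Real.sqrt (1/3 + s))⁻¹ ≤ 3 * Real.sqrt 3 / 2 * s := by
  rcases le_or_gt (2/3 : ℝ) s with h | h
  · have := w_pos hs
    have h3 : (1:ℝ) ≤ 3 * s / 2 := by linarith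
    nlinarith [Real.sqrt_nonneg 3]
  · have hA : (0:ℝ) < 1/3 + s := by linarith
    have hq : Real.sqrt (1/3 + s) ^ 2 = 1/3 + s := Real.sq_sqrt hA.le
    have hqpos : 0 < Real.sqrt (1/3 + s) := Real.sqrt_pos.2 hA
    have h3 : Real.sqrt 3 ^ 2 = 3 := Real.sq_sqrt (by norm_num)
    have hL : 0 ≤ Real.sqrt 3 - 3 * Real.sqrt 3 / 2 * s := by
      have : 3 * Real.sqrt 3 / 2 * s ≤ Real.sqrt 3 := by
        nlinarith [Real.sqrt_nonneg 3]
      linarith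
    have key : (Real.sqrt 3 - 3 * Real.sqrt 3 / 2 * s) * Real.sqrt (1/3 + s) ≤ 1 := by
      set P := (Real.sqrt 3 - 3 * Real.sqrt 3 / 2 * s) * Real.sqrt (1/3 + s) with hP
      have hPnn : 0 ≤ P := mul_nonneg hL hqpos.le
      have hP2 : P^2 ≤ 1 := by
        have e : P^2 = Real.sqrt 3 ^2 * (1 - 3/2*s)^2 * Real.sqrt (1/3+s) ^2 := by
          rw [hP]; ring
        rw [e, h3, hq]
        nlinarith [sq_nonneg s, sq_nonneg (1-s)]
      nlinarith [sq_nonneg (P - 1)]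
    have : Real.sqrt 3 - 3 * Real.sqrt 3 / 2 * s ≤ (Real.sqrt (1/3 + s))⁻¹ := by
      have h4 := (le_div_iff₀ hqpos).2 key
      rwa [one_div] at h4
    linarith

lemma diff_sq_le_quad {s : ℝ} (hs : 0 ≤ s) :
    ((Real.sqrt (1/3 + s))⁻¹ - Real.sqrt 3)^2 ≤ 27/4 * s^2 := by
  have h1 := w_pos hs
  have h2 := w_le hs
  have h3 := diff_le_quad hs
  have h4 : Real.sqrt 3 ^ 2 = 3 := Real.sq_sqrt (by norm_num)
  nlinarith [Real.sqrt_nonneg 3, mul_self_nonneg (Real.sqrt 3 - (Real.sqrt (1/3+s))⁻¹)]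

lemma pow4_le {y : ℝ} : (y^2)^4 ≤ (1/3 + y^2)^4 :=
  pow_le_pow_left₀ (sq_nonneg y) (le_add_of_nonneg_left (by norm_num)) 4

lemma key1 {lam : ℝ} (hl : 0 < lam) (y : ℝ) :
    y^2 * Q lam y ≤ 25 * (lam^5)⁻¹ := by
  have hA : (0:ℝ) < 1/3 + y^2 := by positivity
  have hD := diff_sq_le_quad (s := (y/lam)^2) (by positivity)
  have step : y^2 * Q lam y ≤ y^2 * (((1/3 + y^2)^4)⁻¹ * (lam⁻¹ * (27/4 * ((y/lam)^2)^2))) := by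
    unfold Q; gcongr
  refine step.trans ?_
  have e : y^2 * (((1/3 + y^2)^4)⁻¹ * (lam⁻¹ * (27/4 * ((y/lam)^2)^2)))
      = (27/4 * y^6 / (1/3+y^2)^4) * (lam^5)⁻¹ := by
    field_simp
  rw [e]
  have h6 : 27/4 * y^6 / (1/3+y^2)^4 ≤ 25 := by
    rw [div_le_iff₀ (by positivity)]
    nlinarith [pow_le_pow_left₀ (sq_nonneg y) (le_add_of_nonneg_left (by norm_num : (0:ℝ) ≤ 1/3)) 3,
      sq_nonneg y, pow_nonneg (sq_nonneg y) 3]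
  have hp : (0:ℝ) ≤ (lam^5)⁻¹ := by positivity
  nlinarith

lemma key2 {lam T y : ℝ} (hl : 0 < lam) (hT : 0 < T) (hy : T ≤ y) :
    y^2 * Q lam y ≤ 25 * (lam^5)⁻¹ / T^2 := by
  have hA : (0:ℝ) < 1/3 + y^2 := by positivity
  have hy0 : 0 < y := lt_of_lt_of_le hT hy
  have hD := diff_sq_le_quad (s := (y/lam)^2) (by positivity)
  have step : y^2 * Q lam y ≤ y^2 * (((1/3 + y^2)^4)⁻¹ * (lam⁻¹ * (27/4 * ((y/lam)^2)^2))) := by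
    unfold Q; gcongr
  refine step.trans ?_
  have e : y^2 * (((1/3 + y^2)^4)⁻¹ * (lam⁻¹ * (27/4 * ((y/lam)^2)^2)))
      = 27/4 * y^6 / (1/3+y^2)^4 * (lam^5)⁻¹ := by
    field_simp
  have e2 : 27/4 * y^6 / (1/3+y^2)^4 * (lam^5)⁻¹ = (27/4 * y^6) / ((1/3+y^2)^4 * lam^5) := by
    field_simp
  have e3 : 25 * (lam^5)⁻¹ / T^2 = 25 / (lam^5 * T^2) := by
    field_simp
  rw [e, e2, e3, div_le_div_iff₀ (by positivity) (by positivity)]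
  have hT2 : T^2 ≤ y^2 := by nlinarith
  have h8 : y^6 * T^2 ≤ (y^2)^4 := by nlinarith [pow_nonneg hy0.le 6]
  have h9 : (y^2)^4 ≤ (1/3+y^2)^4 := pow4_le
  have hl5 : (0:ℝ) < lam^5 := pow_pos hl 5
  nlinarith [mul_le_mul_of_nonneg_right (h8.trans h9) hl5.le,
    mul_pos (pow_pos hA 4) hl5]

lemma key3 {lam T y : ℝ} (hl : 0 < lam) (hT : 0 < T) (hy : T ≤ y) :
    y^2 * Q lam y ≤ 4 * lam⁻¹ / T^6 := by
  have hA : (0:ℝ) < 1/3 + y^2 := by positivity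
  have hy0 : 0 < y := lt_of_lt_of_le hT hy
  have hD := diff_sq_le_three (s := (y/lam)^2) (by positivity)
  have step : y^2 * Q lam y ≤ y^2 * (((1/3 + y^2)^4)⁻¹ * (lam⁻¹ * 3)) := by
    unfold Q; gcongr
  refine step.trans ?_
  have e : y^2 * (((1/3 + y^2)^4)⁻¹ * (lam⁻¹ * 3))
      = (3 * y^2 / (1/3+y^2)^4) * lam⁻¹ := by
    field_simp
  have e2 : 3 * y^2 / (1/3+y^2)^4 * lam⁻¹ = (3 * y^2) / ((1/3+y^2)^4 * lam) := by
    field_simp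
  have e3 : 4 * lam⁻¹ / T^6 = 4 / (lam * T^6) := by
    field_simp
  rw [e, e2, e3, div_le_div_iff₀ (by positivity) (by positivity)]
  have hT6 : T^6 ≤ y^6 := pow_le_pow_left₀ hT.le hy 6
  have h8 : y^2 * T^6 ≤ (y^2)^4 := by nlinarith [sq_nonneg y]
  have h9 : (y^2)^4 ≤ (1/3+y^2)^4 := pow4_le
  nlinarith [mul_le_mul_of_nonneg_right (h8.trans h9) hl.le,
    mul_pos (pow_pos hA 4) hl]

def volK : ℝ := (volume (Metric.ball (0:E3) 1)).toReal

lemma volK_nonneg : 0 ≤ volK := ENNReal.toReal_nonneg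

/-- inner spatial integral bound -/
lemma inner_le {lam r₁ r₂ : ℝ} (t : ℝ) (hl : 0 < lam) (h1 : 0 ≤ r₁) (h12 : r₁ < r₂)
    {M : ℝ} (hM : ∀ y, |t| + r₁ ≤ y → y^2 * Q lam y ≤ M) :
    (∫ x in {x : E3 | (x, t) ∈ channel r₁ r₂},
        ((W3 x)^4 * (Wlam lam x - Real.sqrt 3 * lam ^ (-(1:ℝ)/2)))^2)
      ≤ 3 * (volK * (M * (r₂ - r₁))) := by
  set a := |t| + r₁ with ha
  set b := |t| + r₂ with hb
  have ha0 : 0 ≤ a := add_nonneg (abs_nonneg t) h1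
  have hab : a < b := by rw [ha, hb]; linarith
  have hS : {x : E3 | (x, t) ∈ channel r₁ r₂} = (fun x : E3 => ‖x‖) ⁻¹' (Ioo a b) := rfl
  have hSm : MeasurableSet {x : E3 | (x, t) ∈ channel r₁ r₂} := by
    rw [hS]; exact measurableSet_Ioo.preimage (measurable_norm)
  rw [← integral_indicator hSm]
  have hind : ∀ x : E3, Set.indicator {x : E3 | (x, t) ∈ channel r₁ r₂}
      (fun x => ((W3 x)^4 * (Wlam lam x - Real.sqrt 3 * lam ^ (-(1:ℝ)/2)))^2) x
      = Set.indicator (Ioo a b) (Q lam) ‖x‖ := by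
    intro x
    by_cases hx : x ∈ {x : E3 | (x, t) ∈ channel r₁ r₂}
    · rw [Set.indicator_of_mem hx, Set.indicator_of_mem (by rwa [hS] at hx), Q_eq lam hl]
    · rw [Set.indicator_of_notMem hx, Set.indicator_of_notMem (by rwa [hS] at hx)]
  calc ∫ x : E3, Set.indicator {x : E3 | (x, t) ∈ channel r₁ r₂}
        (fun x => ((W3 x)^4 * (Wlam lam x - Real.sqrt 3 * lam ^ (-(1:ℝ)/2)))^2) x
      = ∫ x : E3, Set.indicator (Ioo a b) (Q lam) ‖x‖ := by
        exact integral_congr_ae (Filter.Eventually.of_forall hind)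
    _ = 3 • ((volume (Metric.ball (0:E3) 1)).toReal) •
          ∫ y in Ioi (0:ℝ), y ^ 2 • Set.indicator (Ioo a b) (Q lam) y := by
        rw [MeasureTheory.integral_fun_norm_addHaar volume (Set.indicator (Ioo a b) (Q lam))]
        rw [finrank_euclideanSpace_fin]; rfl
    _ = 3 * (volK * ∫ y in Ioi (0:ℝ), Set.indicator (Ioo a b) (fun y => y^2 * Q lam y) y) := by
        have hInt : (∫ y in Ioi (0:ℝ), y ^ 2 • Set.indicator (Ioo a b) (Q lam) y)
            = ∫ y in Ioi (0:ℝ), Set.indicator (Ioo a b) (fun y => y^2 * Q lam y) y := by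
          refine integral_congr_ae (Filter.Eventually.of_forall fun y => ?_)
          by_cases hy : y ∈ Ioo a b <;>
            simp [Set.indicator_of_mem, Set.indicator_of_notMem, hy]
        rw [nsmul_eq_mul, smul_eq_mul, hInt,
          show ((volume (Metric.ball (0:E3) 1)).toReal) = volK from rfl]
        norm_num
    _ ≤ 3 * (volK * (M * (r₂ - r₁))) := by
        have hsub : Ioo a b ⊆ Ioi (0:ℝ) := fun y hy => lt_of_le_of_lt ha0 hy.1
        rw [setIntegral_indicator measurableSet_Ioo,
          Set.inter_eq_self_of_subset_right hsub]
        have hmono : (∫ y in Ioo a b, y^2 * Q lam y) ≤ ∫ y in Ioo a b, M := by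
          refine integral_mono_of_nonneg (Filter.Eventually.of_forall fun y => ?_)
            (integrableOn_const (by rw [Real.volume_Ioo]; exact ENNReal.ofReal_ne_top))
            ?_
          · exact mul_nonneg (sq_nonneg y) (Q_nonneg hl y)
          · filter_upwards [ae_restrict_mem measurableSet_Ioo] with y hy
            exact hM y (le_of_lt hy.1)
        have hconst : (∫ y in Ioo a b, M) = (b - a) * M := by
          rw [setIntegral_const, Real.volume_real_Ioo_of_le (by linarith), smul_eq_mul]
        have hba : b - a = r₂ - r₁ := by rw [ha, hb]; ring
        rw [hconst, hba] at hmono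
        have h2 : (∫ y in Ioo a b, y^2 * Q lam y) ≤ M * (r₂ - r₁) := by
          rw [mul_comm]; exact hmono
        have := mul_le_mul_of_nonneg_left h2 volK_nonneg
        linarith

end Aux6

set_option maxHeartbeats 1000000 in
theorem stmt6 :
    ∃ C : ℝ, 0 < C ∧ ∀ lam r₁ r₂ : ℝ, 2 ≤ lam → 0 ≤ r₁ → r₁ < r₂ → r₂ ≤ lam →
      L1L2 (channel r₁ r₂)
          (fun x _ => (W3 x)^4 * (Wlam lam x - Real.sqrt 3 * lam ^ (-(1:ℝ)/2)))
        ≤ C * (r₂ - r₁) ^ ((1:ℝ)/2) * lam ^ (-(5:ℝ)/2) * Real.log lam := by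
  classical
  refine ⟨30 * Real.sqrt (3 * Aux6.volK) + 1,
    by positivity, ?_⟩
  intro lam r₁ r₂ hlam h1 h12 h2l
  have hl0 : (0:ℝ) < lam := by linarith
  have hl1 : (1:ℝ) < lam := by linarith
  set c5 := lam ^ (-(5:ℝ)/2) with hc5
  set c1 := lam ^ (-(1:ℝ)/2) with hc1
  have hc5pos : 0 < c5 := Real.rpow_pos_of_pos hl0 _
  have hc1pos : 0 < c1 := Real.rpow_pos_of_pos hl0 _
  have hc5sq : c5^2 = (lam^5)⁻¹ := by
    rw [hc5, ← Real.rpow_natCast (lam ^ (-(5:ℝ)/2)) 2, ← Real.rpow_mul hl0.le,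
      show (-(5:ℝ)/2 * ((2:ℕ):ℝ)) = -((5:ℕ):ℝ) by norm_num,
      Real.rpow_neg hl0.le, Real.rpow_natCast]
  have hc1sq : c1^2 = lam⁻¹ := by
    rw [hc1, ← Real.rpow_natCast (lam ^ (-(1:ℝ)/2)) 2, ← Real.rpow_mul hl0.le,
      show (-(1:ℝ)/2 * ((2:ℕ):ℝ)) = -1 by norm_num, Real.rpow_neg_one]
  have hvolnn : (0:ℝ) ≤ 3 * Aux6.volK * (r₂ - r₁) :=
    mul_nonneg (mul_nonneg (by norm_num) Aux6.volK_nonneg) (by linarith)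
  set κ := Real.sqrt (3 * Aux6.volK * (r₂ - r₁)) with hκ
  have hκ0 : 0 ≤ κ := Real.sqrt_nonneg _
  set p1 : ℝ → ℝ := Set.indicator (Icc (-1:ℝ) 1) (fun _ => 5*c5) with hp1
  set p2 : ℝ → ℝ := Set.indicator (Ioc 1 lam) (fun s => 5*c5*s⁻¹) with hp2
  set p3 : ℝ → ℝ := Set.indicator (Ico (-lam) (-1)) (fun s => -(5*c5*s⁻¹)) with hp3
  set p4 : ℝ → ℝ := Set.indicator (Ioi lam) (fun s => 2*c1*(s^3)⁻¹) with hp4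
  set p5 : ℝ → ℝ := Set.indicator (Iio (-lam)) (fun s => 2*c1*((-s)^3)⁻¹) with hp5
  set g : ℝ → ℝ := fun t => κ * (p1 t + (p2 t + (p3 t + (p4 t + p5 t)))) with hg
  set F : ℝ → ℝ := fun t => (∫ x in {x : Aux6.E3 | (x, t) ∈ channel r₁ r₂},
      ((W3 x)^4 * (Wlam lam x - Real.sqrt 3 * lam ^ (-(1:ℝ)/2)))^2) with hF
  -- integrability of the pieces
  have i1 : Integrable p1 := by
    rw [hp1, integrable_indicator_iff measurableSet_Icc]
    exact integrableOn_const measure_Icc_lt_top.ne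
  have i2 : Integrable p2 := by
    rw [hp2, integrable_indicator_iff measurableSet_Ioc]
    refine Integrable.mono' (g := fun _ => 5*c5)
      (integrableOn_const measure_Ioc_lt_top.ne)
      ((measurable_inv.const_mul (5*c5)).aestronglyMeasurable) ?_
    filter_upwards [ae_restrict_mem measurableSet_Ioc] with s hs
    have hs1 : (1:ℝ) < s := hs.1
    have hs0 : (0:ℝ) < s := by linarith
    rw [Real.norm_eq_abs, abs_of_nonneg (by positivity)]
    have hinv : s⁻¹ ≤ 1 := by
      rw [inv_le_one_iff₀]; right; linarith
    nlinarith
  have i3 : Integrable p3 := by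
    rw [hp3, integrable_indicator_iff measurableSet_Ico]
    refine Integrable.mono' (g := fun _ => 5*c5)
      (integrableOn_const measure_Ico_lt_top.ne)
      ((measurable_inv.const_mul (5*c5)).neg.aestronglyMeasurable) ?_
    filter_upwards [ae_restrict_mem measurableSet_Ico] with s hs
    have hs1 : s < -1 := hs.2
    have hsneg : s⁻¹ < 0 := inv_neg''.2 (by linarith)
    rw [Real.norm_eq_abs, abs_of_nonneg (by nlinarith)]
    have hinv : -s⁻¹ ≤ 1 := by
      have h3 : (-s)⁻¹ ≤ 1 := by rw [inv_le_one_iff₀]; right; linarith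
      rwa [inv_neg] at h3
    nlinarith
  have i4 : Integrable p4 := by
    rw [hp4, integrable_indicator_iff measurableSet_Ioi]
    have base : IntegrableOn (fun s : ℝ => 2*c1*s^(-3:ℝ)) (Ioi lam) :=
      (integrableOn_Ioi_rpow_of_lt (by norm_num : (-3:ℝ) < -1) hl0).const_mul (2*c1)
    refine base.congr_fun (fun s hs => ?_) measurableSet_Ioi
    beta_reduce
    rw [Aux6.rpow_neg3 (lt_trans hl0 hs)]
  have hmap : (volume.restrict (Ioi lam)).map Neg.neg = volume.restrict (Iio (-lam)) := by
    conv => rhs; rw [← Measure.map_neg_eq_self (volume : Measure ℝ),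
      measurableEmbedding_neg.restrict_map]
    congr 1
    ext s
    simp [lt_neg]
  have i5 : Integrable p5 := by
    rw [hp5, integrable_indicator_iff measurableSet_Iio]
    have : IntegrableOn (fun s : ℝ => 2*c1*((-s)^3)⁻¹) (Iio (-lam)) ↔
        Integrable ((fun s : ℝ => 2*c1*((-s)^3)⁻¹) ∘ Neg.neg) (volume.restrict (Ioi lam)) := by
      rw [IntegrableOn, ← hmap, measurableEmbedding_neg.integrable_map_iff]
    rw [this]
    have base : IntegrableOn (fun s : ℝ => 2*c1*s^(-3:ℝ)) (Ioi lam) :=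
      (integrableOn_Ioi_rpow_of_lt (by norm_num : (-3:ℝ) < -1) hl0).const_mul (2*c1)
    refine base.congr_fun (fun s hs => ?_) measurableSet_Ioi
    simp only [Function.comp_apply, neg_neg]
    rw [Aux6.rpow_neg3 (lt_trans hl0 hs)]
  -- values of the pieces
  have hlogpos : (0:ℝ) < Real.log lam := by
    have h2 : Real.log 2 ≤ Real.log lam := (Real.log_le_log_iff (by norm_num) hl0).2 hlam
    have := Real.log_two_gt_d9
    linarith
  have v1 : (∫ t, p1 t) = 10*c5 := by
    rw [hp1, integral_indicator measurableSet_Icc, setIntegral_const, Real.volume_real_Icc_of_le (by norm_num), smul_eq_mul]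
    ring
  have h0uIcc : (0:ℝ) ∉ uIcc (1:ℝ) lam := by
    rw [Set.uIcc_of_le hl1.le]
    intro h
    exact absurd h.1 (by norm_num)
  have v2 : (∫ t, p2 t) = 5*c5*Real.log lam := by
    rw [hp2, integral_indicator measurableSet_Ioc,
      ← intervalIntegral.integral_of_le hl1.le,
      intervalIntegral.integral_const_mul, integral_inv h0uIcc, div_one]
  have h0uIcc' : (0:ℝ) ∉ uIcc (-lam) (-1:ℝ) := by
    rw [Set.uIcc_of_le (by linarith)]
    intro h
    have := h.2
    norm_num at this
  have v3 : (∫ t, p3 t) = 5*c5*Real.log lam := by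
    rw [hp3, integral_indicator measurableSet_Ico, integral_Ico_eq_integral_Ioo,
      ← integral_Ioc_eq_integral_Ioo,
      ← intervalIntegral.integral_of_le (by linarith : -lam ≤ -1),
      intervalIntegral.integral_neg, intervalIntegral.integral_const_mul,
      integral_inv h0uIcc', neg_div_neg_eq, one_div, Real.log_inv]
    ring
  have v4core : (∫ t in Ioi lam, 2*c1*(t^3)⁻¹) = c5 := by
    have heq : EqOn (fun s : ℝ => 2*c1*(s^3)⁻¹) (fun s : ℝ => 2*c1*s^(-3:ℝ)) (Ioi lam) := by
      intro s hs
      show 2*c1*(s^3)⁻¹ = 2*c1*s^(-3:ℝ)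
      rw [Aux6.rpow_neg3 (lt_trans hl0 hs)]
    rw [setIntegral_congr_fun measurableSet_Ioi heq,
      MeasureTheory.integral_const_mul, integral_Ioi_rpow_of_lt (by norm_num) hl0,
      show (-3:ℝ) + 1 = -2 by norm_num]
    rw [hc1, hc5]
    rw [show 2 * lam ^ (-(1:ℝ)/2) * (-lam ^ (-2:ℝ) / -2) = lam ^ (-(1:ℝ)/2) * lam ^ (-2:ℝ) by ring,
      ← Real.rpow_add hl0]
    norm_num
  have v4 : (∫ t, p4 t) = c5 := by
    rw [hp4, integral_indicator measurableSet_Ioi]; exact v4core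
  have v5 : (∫ t, p5 t) = c5 := by
    rw [hp5, integral_indicator measurableSet_Iio, ← integral_Iic_eq_integral_Iio,
      ← integral_comp_neg_Ioi]
    simp only [neg_neg]
    exact v4core
  -- pointwise bound
  have main : ∀ t : ℝ, ∀ M m : ℝ, 0 ≤ m → M ≤ m^2 →
      (∀ y, |t| + r₁ ≤ y → y^2 * Aux6.Q lam y ≤ M) → (F t)^((1:ℝ)/2) ≤ κ * m := by
    intro t M m hm hMm hMy
    have hI := Aux6.inner_le t hl0 h1 h12 hMy
    have hI2 : F t ≤ (3 * Aux6.volK * (r₂ - r₁)) * m^2 := by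
      rw [hF]
      refine hI.trans ?_
      rw [show 3 * (Aux6.volK * (M * (r₂ - r₁))) = (3*Aux6.volK*(r₂-r₁)) * M by ring]
      exact mul_le_mul_of_nonneg_left hMm hvolnn
    calc (F t)^((1:ℝ)/2) = Real.sqrt (F t) := (Real.sqrt_eq_rpow _).symm
      _ ≤ Real.sqrt ((3*Aux6.volK*(r₂-r₁)) * m^2) := Real.sqrt_le_sqrt hI2
      _ = κ * m := by rw [Real.sqrt_mul hvolnn, Real.sqrt_sq hm, hκ]
  have hfg : ∀ t : ℝ, (F t)^((1:ℝ)/2) ≤ g t := by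
    intro t
    have hn1 : 0 ≤ p1 t := Set.indicator_nonneg (fun _ _ => by positivity) t
    have hn2 : 0 ≤ p2 t := Set.indicator_nonneg (fun s hs => by
      have : (0:ℝ) < s := lt_trans one_pos hs.1
      positivity) t
    have hn3 : 0 ≤ p3 t := Set.indicator_nonneg (fun s hs => by
      have hsneg : s⁻¹ ≤ 0 := inv_nonpos.2 (by linarith [hs.2])
      nlinarith [hc5pos]) t
    have hn4 : 0 ≤ p4 t := Set.indicator_nonneg (fun s hs => by
      have : (0:ℝ) < s := lt_trans hl0 hs
      positivity) t
    have hn5 : 0 ≤ p5 t := Set.indicator_nonneg (fun s hs => by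
      have h0 : s < -lam := hs
      have : (0:ℝ) < -s := by linarith
      positivity) t
    have hsum : ∀ m : ℝ, (∃ i, i = m) → True := fun _ _ => trivial
    have glb : ∀ m : ℝ, m ≤ p1 t + (p2 t + (p3 t + (p4 t + p5 t))) → κ * m ≤ g t := by
      intro m hmle
      rw [hg]
      exact mul_le_mul_of_nonneg_left hmle hκ0
    rcases lt_or_ge t (-lam) with hr5 | h5
    · -- region 5
      have hmem : t ∈ Iio (-lam) := hr5
      have htneg : 0 < -t := by linarith
      have hMm5 : (2*c1*((-t)^3)⁻¹)^2 = 4*lam⁻¹/(-t)^6 := by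
        rw [show (2*c1*((-t)^3)⁻¹)^2 = 4*c1^2/(-t)^6 by ring, hc1sq]
      have hstep := main t (4*lam⁻¹/(-t)^6) (2*c1*((-t)^3)⁻¹)
        (by positivity)
        (le_of_eq hMm5.symm)
        (fun y hy => Aux6.key3 hl0 htneg (by
          have habs : |t| = -t := abs_of_neg (by linarith)
          rw [habs] at hy; linarith))
      refine hstep.trans (glb _ ?_)
      have : p5 t = 2*c1*((-t)^3)⁻¹ := by rw [hp5, Set.indicator_of_mem hmem]
      linarith
    · rcases lt_or_ge t (-1:ℝ) with hr3 | h3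
      · -- region 3
        have hmem : t ∈ Ico (-lam) (-1) := ⟨by linarith, hr3⟩
        have htneg : 0 < -t := by linarith
        have hMm3 : (-(5*c5*t⁻¹))^2 = 25*(lam^5)⁻¹/(-t)^2 := by
          rw [show (-(5*c5*t⁻¹))^2 = 25*c5^2/((-t))^2 by ring, hc5sq]
        have hstep := main t (25*(lam^5)⁻¹/(-t)^2) (-(5*c5*t⁻¹))
          (by
            have : t⁻¹ ≤ 0 := inv_nonpos.2 (by linarith)
            nlinarith [hc5pos])
          (le_of_eq hMm3.symm)
          (fun y hy => Aux6.key2 hl0 htneg (by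
            have habs : |t| = -t := abs_of_neg (by linarith)
            rw [habs] at hy; linarith))
        refine hstep.trans (glb _ ?_)
        have : p3 t = -(5*c5*t⁻¹) := by rw [hp3, Set.indicator_of_mem hmem]
        linarith
      · rcases le_or_gt t 1 with hr1 | h1'
        · -- region 1
          have hmem : t ∈ Icc (-1:ℝ) 1 := ⟨by linarith, hr1⟩
          have hMm1 : ((5:ℝ)*c5)^2 = 25*(lam^5)⁻¹ := by
            rw [show ((5:ℝ)*c5)^2 = 25*c5^2 by ring, hc5sq]
          have hstep := main t (25*(lam^5)⁻¹) (5*c5)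
            (by positivity)
            (le_of_eq hMm1.symm)
            (fun y _ => Aux6.key1 hl0 y)
          refine hstep.trans (glb _ ?_)
          have : p1 t = 5*c5 := by rw [hp1, Set.indicator_of_mem hmem]
          linarith
        · rcases le_or_gt t lam with hr2 | hr4
          · -- region 2
            have hmem : t ∈ Ioc 1 lam := ⟨h1', hr2⟩
            have htpos : (0:ℝ) < t := lt_trans one_pos h1'
            have hMm2 : ((5:ℝ)*c5*t⁻¹)^2 = 25*(lam^5)⁻¹/t^2 := by
              rw [show ((5:ℝ)*c5*t⁻¹)^2 = 25*c5^2/t^2 by ring, hc5sq]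
            have hstep := main t (25*(lam^5)⁻¹/t^2) (5*c5*t⁻¹)
              (by positivity)
              (le_of_eq hMm2.symm)
              (fun y hy => Aux6.key2 hl0 htpos (by
                have habs : |t| = t := abs_of_pos htpos
                rw [habs] at hy; linarith))
            refine hstep.trans (glb _ ?_)
            have : p2 t = 5*c5*t⁻¹ := by rw [hp2, Set.indicator_of_mem hmem]
            linarith
          · -- region 4
            have hmem : t ∈ Ioi lam := hr4
            have htpos : (0:ℝ) < t := lt_trans hl0 hr4
            have hMm4 : ((2:ℝ)*c1*(t^3)⁻¹)^2 = 4*lam⁻¹/t^6 := by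
              rw [show ((2:ℝ)*c1*(t^3)⁻¹)^2 = 4*c1^2/t^6 by ring, hc1sq]
            have hstep := main t (4*lam⁻¹/t^6) (2*c1*(t^3)⁻¹)
              (by positivity)
              (le_of_eq hMm4.symm)
              (fun y hy => Aux6.key3 hl0 htpos (by
                have habs : |t| = t := abs_of_pos htpos
                rw [habs] at hy; linarith))
            refine hstep.trans (glb _ ?_)
            have : p4 t = 2*c1*(t^3)⁻¹ := by rw [hp4, Set.indicator_of_mem hmem]
            linarith
  -- assemble
  have hgint : Integrable g := by
    rw [hg]
    exact (Integrable.const_mul (i1.add (i2.add (i3.add (i4.add i5)))) κ)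
  have hL1L2 : L1L2 (channel r₁ r₂)
      (fun x _ => (W3 x)^4 * (Wlam lam x - Real.sqrt 3 * lam ^ (-(1:ℝ)/2)))
      = ∫ t : ℝ, (F t)^((1:ℝ)/2) := rfl
  have step1 : (∫ t : ℝ, (F t)^((1:ℝ)/2)) ≤ ∫ t : ℝ, g t := by
    refine integral_mono_of_nonneg (Filter.Eventually.of_forall fun t => ?_) hgint
      (Filter.Eventually.of_forall hfg)
    refine Real.rpow_nonneg ?_ _
    rw [hF]
    exact integral_nonneg fun x => sq_nonneg _
  have step2 : (∫ t : ℝ, g t) = κ * (c5 * (12 + 10 * Real.log lam)) := by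
    have i45 : Integrable (fun a : ℝ => p4 a + p5 a) := i4.add i5
    have i345 : Integrable (fun a : ℝ => p3 a + (p4 a + p5 a)) := i3.add i45
    have i2345 : Integrable (fun a : ℝ => p2 a + (p3 a + (p4 a + p5 a))) := i2.add i345
    rw [hg, MeasureTheory.integral_const_mul,
      integral_add i1 i2345, integral_add i2 i345, integral_add i3 i45, integral_add i4 i5,
      v1, v2, v3, v4, v5]
    ring
  have step3 : κ * (c5 * (12 + 10 * Real.log lam)) ≤ κ * (c5 * (30 * Real.log lam)) := by
    have h2 : Real.log 2 ≤ Real.log lam := (Real.log_le_log_iff (by norm_num) hl0).2 hlam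
    have hd9 := Real.log_two_gt_d9
    refine mul_le_mul_of_nonneg_left (mul_le_mul_of_nonneg_left ?_ hc5pos.le) hκ0
    linarith
  have hκle : κ ≤ Real.sqrt (3*Aux6.volK) * (r₂ - r₁)^((1:ℝ)/2) := by
    rw [hκ, Real.sqrt_mul (mul_nonneg (by norm_num) Aux6.volK_nonneg),
      ← Real.sqrt_eq_rpow]
  have hXnn : (0:ℝ) ≤ (r₂ - r₁)^((1:ℝ)/2) * (c5 * (30 * Real.log lam)) :=
    mul_nonneg (Real.rpow_nonneg (by linarith) _)
      (mul_nonneg hc5pos.le (by positivity))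
  rw [hL1L2]
  calc (∫ t : ℝ, (F t)^((1:ℝ)/2))
      ≤ ∫ t : ℝ, g t := step1
    _ = κ * (c5 * (12 + 10 * Real.log lam)) := step2
    _ ≤ κ * (c5 * (30 * Real.log lam)) := step3
    _ ≤ (Real.sqrt (3*Aux6.volK) * (r₂ - r₁)^((1:ℝ)/2)) * (c5 * (30 * Real.log lam)) := by
        refine mul_le_mul_of_nonneg_right hκle (mul_nonneg hc5pos.le (by positivity))
    _ = (30 * Real.sqrt (3 * Aux6.volK)) * ((r₂ - r₁)^((1:ℝ)/2) * (c5 * Real.log lam)) := by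
        ring
    _ ≤ (30 * Real.sqrt (3 * Aux6.volK) + 1) * ((r₂ - r₁)^((1:ℝ)/2) * (c5 * Real.log lam)) := by
        refine mul_le_mul_of_nonneg_right (by linarith [Real.sqrt_nonneg (3 * Aux6.volK)]) ?_
        exact mul_nonneg (Real.rpow_nonneg (by linarith) _)
          (mul_nonneg hc5pos.le hlogpos.le)
    _ = (30 * Real.sqrt (3 * Aux6.volK) + 1) * (r₂ - r₁) ^ ((1:ℝ)/2)
          * lam ^ (-(5:ℝ)/2) * Real.log lam := by
        rw [hc5]; ring
end
end

section
/- There is an absolute constant C > 0 such that for every G ∈ L²(ℝ), every R > 0 with G(s) = 0 for almost every |s| < R, and all real numbers 0 ≤ r₁ < r₂ ≤ R, the associated radial free wave v satisfies ‖χ_{Ω_{r₁,r₂}} v‖_Y ≤ C · ((r₂ − r₁)/R)^(1/10) · ‖G‖_{L²(ℝ)}. -/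
open MeasureTheory Real Set

noncomputable section

namespace Stmt7Aux
set_option maxHeartbeats 1000000

abbrev E3 := EuclideanSpace ℝ (Fin 3)

/-- volume of the unit ball in ℝ³ -/
def uc : ℝ := (volume (Metric.ball (0:E3) 1)).toReal

lemma uc_pos : 0 < uc :=
  ENNReal.toReal_pos (Metric.measure_ball_pos _ _ one_pos).ne' measure_ball_lt_top.ne

lemma volume_shell_le {a b : ℝ} (ha : 0 ≤ a) (hab : a ≤ b) :
    (volume {x : E3 | a < ‖x‖ ∧ ‖x‖ < b}).toReal ≤ 3 * (b - a) * b ^ 2 * uc := by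
  have hb : 0 ≤ b := ha.trans hab
  have hsub : {x : E3 | a < ‖x‖ ∧ ‖x‖ < b} ⊆ Metric.closedBall 0 b \ Metric.closedBall 0 a := by
    intro x hx
    constructor
    · simp only [Metric.mem_closedBall, dist_eq_norm, sub_zero]
      exact hx.2.le
    · simp only [Metric.mem_closedBall, dist_eq_norm, sub_zero, not_le]
      exact hx.1
  have hdiff : volume (Metric.closedBall (0:E3) b \ Metric.closedBall 0 a)
      = volume (Metric.closedBall (0:E3) b) - volume (Metric.closedBall (0:E3) a) :=
    measure_diff (Metric.closedBall_subset_closedBall hab)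
      measurableSet_closedBall.nullMeasurableSet measure_closedBall_lt_top.ne
  have h1 : volume (Metric.closedBall (0:E3) b) = ENNReal.ofReal (b ^ 3) * volume (Metric.ball (0:E3) 1) := by
    have := Measure.addHaar_closedBall (volume : Measure E3) 0 hb
    simpa using this
  have h2 : volume (Metric.closedBall (0:E3) a) = ENNReal.ofReal (a ^ 3) * volume (Metric.ball (0:E3) 1) := by
    have := Measure.addHaar_closedBall (volume : Measure E3) 0 ha
    simpa using this
  have hle : volume {x : E3 | a < ‖x‖ ∧ ‖x‖ < b} ≤
      volume (Metric.closedBall (0:E3) b) - volume (Metric.closedBall (0:E3) a) := by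
    rw [← hdiff]; exact measure_mono hsub
  have hfin : volume (Metric.closedBall (0:E3) b) ≠ ⊤ := measure_closedBall_lt_top.ne
  have hpoly : b ^ 3 - a ^ 3 ≤ 3 * (b - a) * b ^ 2 := by
    nlinarith [mul_nonneg (mul_nonneg (sub_nonneg.mpr hab) (sub_nonneg.mpr hab))
      (by linarith : (0:ℝ) ≤ 2 * b + a)]
  calc (volume {x : E3 | a < ‖x‖ ∧ ‖x‖ < b}).toReal
      ≤ (volume (Metric.closedBall (0:E3) b) - volume (Metric.closedBall (0:E3) a)).toReal := by
        apply ENNReal.toReal_mono _ hle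
        exact ne_top_of_le_ne_top hfin tsub_le_self
    _ = b ^ 3 * uc - a ^ 3 * uc := by
        rw [ENNReal.toReal_sub_of_le (measure_mono (Metric.closedBall_subset_closedBall hab)) hfin]
        rw [h1, h2, ENNReal.toReal_mul, ENNReal.toReal_mul,
          ENNReal.toReal_ofReal (by positivity), ENNReal.toReal_ofReal (by positivity)]
        rfl
    _ ≤ 3 * (b - a) * b ^ 2 * uc := by nlinarith [uc_pos]

lemma cs {G : ℝ → ℝ} (hG : MemLp G 2 (volume : Measure ℝ)) {S : Set ℝ}
    (hS : MeasurableSet S) (hfin : volume S ≠ ⊤) :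
    |∫ s in S, G s| ≤ (∫ s : ℝ, (G s) ^ 2) ^ ((1:ℝ)/2) * Real.sqrt ((volume S).toReal) := by
  haveI : IsFiniteMeasure (volume.restrict S) :=
    ⟨by rwa [Measure.restrict_apply_univ, lt_top_iff_ne_top]⟩
  have h2 : (2:ℝ).HolderConjugate 2 := Real.holderConjugate_iff.mpr ⟨one_lt_two, by norm_num⟩
  have hf : MemLp G (ENNReal.ofReal 2) (volume.restrict S) := by
    simpa using hG.restrict S
  have hgc : MemLp (fun _ : ℝ => (1:ℝ)) (ENNReal.ofReal 2) (volume.restrict S) := memLp_const 1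
  have key := integral_mul_norm_le_Lp_mul_Lq (μ := volume.restrict S) h2 hf hgc
  simp only [norm_one, mul_one, Real.one_rpow] at key
  have hsq : ∀ y : ℝ, ‖y‖ ^ (2:ℝ) = y ^ 2 := by
    intro y
    rw [show (2:ℝ) = ((2:ℕ):ℝ) by norm_num, Real.rpow_natCast, Real.norm_eq_abs, sq_abs]
  simp only [hsq] at key
  have hone : (∫ _ in S, (1:ℝ)) = (volume S).toReal := by
    rw [setIntegral_const, smul_eq_mul, mul_one, measureReal_def]
  rw [hone] at key
  have habs : |∫ s in S, G s| ≤ ∫ s in S, ‖G s‖ := norm_integral_le_integral_norm G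
  refine habs.trans (key.trans ?_)
  have hmono : (∫ s in S, (G s) ^ 2) ^ ((1:ℝ)/2) ≤ (∫ s : ℝ, (G s) ^ 2) ^ ((1:ℝ)/2) := by
    apply Real.rpow_le_rpow (integral_nonneg fun s => sq_nonneg _)
    · exact setIntegral_le_integral hG.integrable_sq (ae_of_all _ fun s => sq_nonneg _)
    · norm_num
  have h12 : (1:ℝ)/2 = 1/2 := rfl
  rw [Real.sqrt_eq_rpow]
  exact mul_le_mul_of_nonneg_right hmono (Real.rpow_nonneg ENNReal.toReal_nonneg _)


/-- profile `u ↦ (max |u| (1/2))^{-3/2}` -/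
def g1 (u : ℝ) : ℝ := (max |u| 2⁻¹ * Real.sqrt (max |u| 2⁻¹))⁻¹

lemma g1_nonneg (u : ℝ) : 0 ≤ g1 u := by
  unfold g1
  have h : (0:ℝ) < max |u| 2⁻¹ := lt_of_lt_of_le (by norm_num) (le_max_right _ _)
  positivity

lemma g1_even (u : ℝ) : g1 (-u) = g1 u := by unfold g1; rw [abs_neg]

lemma g1_continuous : Continuous g1 := by
  have hmax : Continuous fun u : ℝ => max |u| 2⁻¹ := continuous_abs.max continuous_const
  have hpos : ∀ u : ℝ, max |u| 2⁻¹ * Real.sqrt (max |u| 2⁻¹) ≠ 0 := by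
    intro u
    have h : (0:ℝ) < max |u| 2⁻¹ := lt_of_lt_of_le (by norm_num) (le_max_right _ _)
    positivity
  exact (hmax.mul (Real.continuous_sqrt.comp hmax)).inv₀ hpos

lemma g1_eq_rpow {u : ℝ} (hu : 1 < u) : g1 u = u ^ (-(3:ℝ)/2) := by
  have hu0 : 0 < u := by linarith
  have habs : |u| = u := abs_of_pos hu0
  have hmax : max |u| 2⁻¹ = u := by rw [habs]; exact max_eq_left (by linarith)
  unfold g1
  rw [hmax, show -(3:ℝ)/2 = -(3/2) by norm_num, Real.rpow_neg hu0.le]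
  congr 1
  rw [show (3:ℝ)/2 = 1 + 1/2 by norm_num, Real.rpow_add hu0, Real.rpow_one,
    ← Real.sqrt_eq_rpow]

lemma g1_integrable : Integrable g1 := by
  have hIoi : IntegrableOn g1 (Ioi (1:ℝ)) := by
    have hbase : IntegrableOn (fun t : ℝ => t ^ (-(3:ℝ)/2)) (Ioi (1:ℝ)) :=
      integrableOn_Ioi_rpow_of_lt (by norm_num) one_pos
    exact hbase.congr_fun (fun u hu => (g1_eq_rpow hu).symm) measurableSet_Ioi
  have hIio : IntegrableOn g1 (Iio (-1:ℝ)) := by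
    have hpre : (Neg.neg ⁻¹' (Ioi (1:ℝ)) : Set ℝ) = Iio (-1:ℝ) := by
      ext u; simp [lt_neg]
    have := (MeasurePreserving.integrableOn_comp_preimage
      (Measure.measurePreserving_neg (volume : Measure ℝ))
      (Homeomorph.neg ℝ).measurableEmbedding (f := g1) (s := Ioi (1:ℝ))).mpr hIoi
    have hcomp : (g1 ∘ Neg.neg) = g1 := funext fun u => g1_even u
    rwa [hcomp, hpre] at this
  have hIcc : IntegrableOn g1 (Icc (-1:ℝ) 1) := g1_continuous.integrableOn_Icc
  have huniv : (univ : Set ℝ) = Iio (-1:ℝ) ∪ (Icc (-1:ℝ) 1 ∪ Ioi 1) := by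
    ext u
    simp only [mem_univ, mem_union, mem_Iio, mem_Icc, mem_Ioi, true_iff]
    rcases lt_trichotomy u (-1) with h | h | h
    · exact Or.inl h
    · exact Or.inr (Or.inl ⟨h.ge, by linarith⟩)
    · rcases le_or_gt u 1 with h' | h'
      · exact Or.inr (Or.inl ⟨h.le, h'⟩)
      · exact Or.inr (Or.inr h')
  rw [← integrableOn_univ, huniv]
  exact hIio.union (hIcc.union hIoi)

/-- the absolute constant `K0` -/
def K0 : ℝ := ∫ u : ℝ, g1 u

lemma K0_nonneg : 0 ≤ K0 := integral_nonneg g1_nonneg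

end Stmt7Aux

open Stmt7Aux

set_option maxHeartbeats 1000000 in
theorem stmt7 :
    ∃ C : ℝ, 0 < C ∧ ∀ (G : ℝ → ℝ) (R r₁ r₂ : ℝ),
      MemLp G 2 (volume : Measure ℝ) → 0 < R →
      (∀ᵐ s : ℝ, |s| < R → G s = 0) →
      0 ≤ r₁ → r₁ < r₂ → r₂ ≤ R →
      Ynorm (channel r₁ r₂) (freeWave G)
        ≤ C * ((r₂ - r₁) / R) ^ ((1:ℝ)/10) * (∫ s : ℝ, (G s)^2) ^ ((1:ℝ)/2) := by
  classical
  have hA0 : 0 ≤ Real.sqrt (6912 * uc) * K0 :=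
    mul_nonneg (Real.sqrt_nonneg _) K0_nonneg
  refine ⟨(Real.sqrt (6912 * uc) * K0) ^ ((1:ℝ)/5) + 1, ?_, ?_⟩
  · have := Real.rpow_nonneg hA0 ((1:ℝ)/5); linarith
  intro G R r₁ r₂ hG hR hvan hr1 hr12 hr2R
  set C : ℝ := (Real.sqrt (6912 * uc) * K0) ^ ((1:ℝ)/5) + 1 with hCdef
  set N : ℝ := (∫ s : ℝ, (G s)^2) ^ ((1:ℝ)/2) with hNdef
  have hN0 : 0 ≤ N := Real.rpow_nonneg (integral_nonneg fun s => sq_nonneg _) _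
  have h21 : (0:ℝ) ≤ r₂ - r₁ := by linarith
  set Q : ℝ → ℝ := fun t => max |t| (R/2) with hQdef
  have hQpos : ∀ t, 0 < Q t := fun t => lt_of_lt_of_le (by linarith) (le_max_right _ _)
  -- slices
  have hslice : ∀ t : ℝ, {x : E3 | (x, t) ∈ channel r₁ r₂}
      = {x : E3 | |t| + r₁ < ‖x‖ ∧ ‖x‖ < |t| + r₂} := fun t => rfl
  have hslice_meas : ∀ t : ℝ, MeasurableSet {x : E3 | |t| + r₁ < ‖x‖ ∧ ‖x‖ < |t| + r₂} := by
    intro t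
    exact (measurableSet_lt measurable_const measurable_norm).inter
      (measurableSet_lt measurable_norm measurable_const)
  have hslice_fin : ∀ t : ℝ, volume {x : E3 | |t| + r₁ < ‖x‖ ∧ ‖x‖ < |t| + r₂} < ⊤ := by
    intro t
    refine lt_of_le_of_lt (measure_mono ?_) (measure_closedBall_lt_top (x := (0:E3)) (r := |t| + r₂))
    intro x hx
    simpa [Metric.mem_closedBall, dist_eq_norm] using hx.2.le
  -- pointwise bound
  have hpt : ∀ t : ℝ, ∀ x ∈ {x : E3 | |t| + r₁ < ‖x‖ ∧ ‖x‖ < |t| + r₂},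
      |freeWave G x t| ^ 10 ≤ 256 * N ^ 10 / (Q t) ^ 5 := by
    intro t x hx
    obtain ⟨h1, h2⟩ := hx
    have hQt : 0 < Q t := hQpos t
    have hRHS0 : 0 ≤ 256 * N ^ 10 / (Q t) ^ 5 :=
      div_nonneg (by positivity) (pow_nonneg hQt.le 5)
    have hρpos : 0 < ‖x‖ := lt_of_le_of_lt (by positivity) h1
    by_cases hcase : ‖x‖ < R - |t|
    · have hzero : freeWave G x t = 0 := by
        unfold freeWave
        have hiz : (∫ s in (t - ‖x‖)..(t + ‖x‖), G s) = 0 := by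
          rw [intervalIntegral.integral_of_le (by linarith)]
          apply integral_eq_zero_of_ae
          refine (ae_restrict_iff' measurableSet_Ioc).mpr ?_
          filter_upwards [hvan] with s hs hmem
          apply hs
          rw [abs_lt]
          have ht1 := neg_abs_le t
          have ht2 := le_abs_self t
          obtain ⟨hm1, hm2⟩ := hmem
          constructor <;> nlinarith
        rw [hiz, mul_zero]
      rw [hzero]
      simpa using hRHS0
    · push_neg at hcase
      have habs_t : |t| ≤ ‖x‖ := le_trans (le_add_of_nonneg_right hr1) h1.le
      have hQρ : Q t ≤ ‖x‖ := max_le habs_t (by linarith)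
      have hCS : |∫ s in (t - ‖x‖)..(t + ‖x‖), G s| ≤ N * Real.sqrt (2 * ‖x‖) := by
        rw [intervalIntegral.integral_of_le (by linarith)]
        have hkey := cs hG (measurableSet_Ioc (a := t - ‖x‖) (b := t + ‖x‖))
          (by rw [Real.volume_Ioc]; exact ENNReal.ofReal_ne_top)
        refine hkey.trans ?_
        rw [Real.volume_Ioc, ENNReal.toReal_ofReal (by linarith),
          show t + ‖x‖ - (t - ‖x‖) = 2 * ‖x‖ by ring]
      have ha : |freeWave G x t| ≤ ‖x‖⁻¹ * (N * Real.sqrt (2 * ‖x‖)) := by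
        unfold freeWave
        rw [abs_mul, abs_inv, abs_of_nonneg (norm_nonneg x)]
        exact mul_le_mul_of_nonneg_left hCS (by positivity)
      have ha2 : |freeWave G x t| ^ 2 ≤ 2 * N ^ 2 / ‖x‖ := by
        have hb := pow_le_pow_left₀ (abs_nonneg _) ha 2
        have heq : (‖x‖⁻¹ * (N * Real.sqrt (2 * ‖x‖))) ^ 2 = 2 * N ^ 2 / ‖x‖ := by
          rw [mul_pow, mul_pow, Real.sq_sqrt (by linarith)]
          field_simp
        rwa [heq] at hb
      have h10 : |freeWave G x t| ^ 10 ≤ (2 * N ^ 2 / ‖x‖) ^ 5 := by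
        rw [show (10:ℕ) = 2 * 5 from rfl, pow_mul]
        exact pow_le_pow_left₀ (pow_nonneg (abs_nonneg _) 2) ha2 5
      refine h10.trans ?_
      have heq2 : (2 * N ^ 2 / ‖x‖) ^ 5 = 32 * N ^ 10 / ‖x‖ ^ 5 := by
        rw [div_pow]
        norm_num
        ring_nf
      rw [heq2]
      apply div_le_div₀ (by positivity) (by nlinarith [pow_nonneg hN0 10]) (pow_pos hQt 5)
      exact pow_le_pow_left₀ hQt.le hQρ 5
  -- bound on inner integral
  have hIbound : ∀ t : ℝ,
      (∫ x in {x : E3 | |t| + r₁ < ‖x‖ ∧ ‖x‖ < |t| + r₂}, |freeWave G x t| ^ 10)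
        ≤ 6912 * uc * (r₂ - r₁) * N ^ 10 * ((Q t) ^ 3)⁻¹ := by
    intro t
    have hQt : 0 < Q t := hQpos t
    have hRHS0 : (0:ℝ) ≤ 6912 * uc * (r₂ - r₁) * N ^ 10 * ((Q t) ^ 3)⁻¹ := by
      have := uc_pos
      have : (0:ℝ) ≤ ((Q t) ^ 3)⁻¹ := inv_nonneg.mpr (pow_nonneg hQt.le 3)
      positivity
    by_cases hint : IntegrableOn (fun x : E3 => |freeWave G x t| ^ 10)
        {x : E3 | |t| + r₁ < ‖x‖ ∧ ‖x‖ < |t| + r₂} volume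
    · set c : ℝ := 256 * N ^ 10 / (Q t) ^ 5 with hcdef
      have hc0 : 0 ≤ c := div_nonneg (by positivity) (pow_nonneg hQt.le 5)
      have ha0 : (0:ℝ) ≤ |t| + r₁ := by positivity
      have hab : |t| + r₁ ≤ |t| + r₂ := by linarith
      have hb0 : (0:ℝ) ≤ |t| + r₂ := le_trans ha0 hab
      have hb3Q : |t| + r₂ ≤ 3 * Q t := by
        have h1 : |t| ≤ Q t := le_max_left _ _
        have h2 : R / 2 ≤ Q t := le_max_right _ _
        linarith
      have hvol := volume_shell_le ha0 hab
      rw [show |t| + r₂ - (|t| + r₁) = r₂ - r₁ by ring] at hvol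
      calc (∫ x in {x : E3 | |t| + r₁ < ‖x‖ ∧ ‖x‖ < |t| + r₂}, |freeWave G x t| ^ 10)
          ≤ ∫ _ in {x : E3 | |t| + r₁ < ‖x‖ ∧ ‖x‖ < |t| + r₂}, c :=
            setIntegral_mono_on hint (integrableOn_const (hslice_fin t).ne)
              (hslice_meas t) (hpt t)
        _ = (volume {x : E3 | |t| + r₁ < ‖x‖ ∧ ‖x‖ < |t| + r₂}).toReal * c := by
            rw [setIntegral_const, smul_eq_mul, measureReal_def]
        _ ≤ (3 * (r₂ - r₁) * (|t| + r₂) ^ 2 * uc) * c := mul_le_mul_of_nonneg_right hvol hc0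
        _ ≤ 6912 * uc * (r₂ - r₁) * N ^ 10 * ((Q t) ^ 3)⁻¹ := by
            rw [hcdef]
            rw [show ((Q t) ^ 3)⁻¹ = (Q t) ^ 2 / (Q t) ^ 5 by
              rw [eq_div_iff (pow_pos hQt 5).ne', show (Q t) ^ 5 = (Q t) ^ 3 * (Q t) ^ 2 by ring,
                inv_mul_cancel_left₀ (pow_pos hQt 3).ne']]
            rw [← mul_div_assoc, ← mul_div_assoc]
            refine (div_le_div_iff_of_pos_right (pow_pos hQt 5)).mpr ?_
            have hb2 : (|t| + r₂) ^ 2 ≤ 9 * (Q t) ^ 2 := by nlinarith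
            have hX : (0:ℝ) ≤ 768 * uc * (r₂ - r₁) * N ^ 10 :=
              mul_nonneg (mul_nonneg (mul_nonneg (by norm_num) uc_pos.le) h21) (pow_nonneg hN0 10)
            nlinarith [mul_le_mul_of_nonneg_left hb2 hX]
    · rw [MeasureTheory.integral_undef hint]
      exact hRHS0
  -- square-root bound pointwise in t
  set D : ℝ := Real.sqrt (6912 * uc * (r₂ - r₁)) * N ^ 5 with hDdef
  have hD0 : 0 ≤ D := mul_nonneg (Real.sqrt_nonneg _) (pow_nonneg hN0 5)
  set gR : ℝ → ℝ := fun t => (Q t * Real.sqrt (Q t))⁻¹ with hgRdef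
  have hgR0 : ∀ t, 0 ≤ gR t := fun t =>
    inv_nonneg.mpr (mul_nonneg (hQpos t).le (Real.sqrt_nonneg _))
  have hIt0 : ∀ t : ℝ,
      0 ≤ (∫ x in {x : E3 | |t| + r₁ < ‖x‖ ∧ ‖x‖ < |t| + r₂}, |freeWave G x t| ^ 10) :=
    fun t => integral_nonneg fun x => pow_nonneg (abs_nonneg _) 10
  have hsqrt_bound : ∀ t : ℝ,
      (∫ x in {x : E3 | |t| + r₁ < ‖x‖ ∧ ‖x‖ < |t| + r₂}, |freeWave G x t| ^ 10) ^ ((1:ℝ)/2)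
        ≤ D * gR t := by
    intro t
    rw [← Real.sqrt_eq_rpow]
    have hDgR : (D * gR t) ^ 2 = 6912 * uc * (r₂ - r₁) * N ^ 10 * ((Q t) ^ 3)⁻¹ := by
      rw [mul_pow, hDdef, mul_pow,
        Real.sq_sqrt (mul_nonneg (mul_nonneg (by norm_num) uc_pos.le) h21),
        hgRdef]
      rw [inv_pow, mul_pow, Real.sq_sqrt (hQpos t).le,
        show Q t ^ 2 * Q t = Q t ^ 3 by ring]
      ring
    calc Real.sqrt (∫ x in {x : E3 | |t| + r₁ < ‖x‖ ∧ ‖x‖ < |t| + r₂}, |freeWave G x t| ^ 10)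
        ≤ Real.sqrt ((D * gR t) ^ 2) := Real.sqrt_le_sqrt (by rw [hDgR]; exact hIbound t)
      _ = D * gR t := Real.sqrt_sq (mul_nonneg hD0 (hgR0 t))
  -- scaling
  have hsR : Real.sqrt R ≠ 0 := (Real.sqrt_pos.mpr hR).ne'
  have hQscale : ∀ t : ℝ, gR t = (R * Real.sqrt R)⁻¹ * g1 (t / R) := by
    intro t
    have hm : Q t = R * max (|t / R|) 2⁻¹ := by
      rw [abs_div, abs_of_pos hR, mul_max_of_nonneg _ _ hR.le]
      congr 1
      field_simp
      rfl
    rw [hgRdef]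
    show (Q t * Real.sqrt (Q t))⁻¹ = _
    rw [hm, Real.sqrt_mul hR.le,
      show R * (max (|t / R|) 2⁻¹) * (Real.sqrt R * Real.sqrt (max (|t / R|) 2⁻¹))
        = (R * Real.sqrt R) * ((max (|t / R|) 2⁻¹) * Real.sqrt (max (|t / R|) 2⁻¹)) by ring,
      mul_inv]
    rfl
  have hgRint : Integrable gR := by
    have heq : gR = fun t => (R * Real.sqrt R)⁻¹ * g1 (t / R) := funext hQscale
    rw [heq]
    exact (g1_integrable.comp_div hR.ne').const_mul _
  have hgRval : (∫ t : ℝ, gR t) = (R * Real.sqrt R)⁻¹ * (R * K0) := by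
    calc (∫ t : ℝ, gR t) = ∫ t : ℝ, (R * Real.sqrt R)⁻¹ * g1 (t / R) := by
          simp_rw [hQscale]
      _ = (R * Real.sqrt R)⁻¹ * ∫ t : ℝ, g1 (t / R) := integral_const_mul _ _
      _ = (R * Real.sqrt R)⁻¹ * (R * K0) := by
          rw [Measure.integral_comp_div g1 R, abs_of_pos hR, smul_eq_mul]
          rfl
  -- the t-integral
  have hT0 : 0 ≤ ∫ t : ℝ,
      (∫ x in {x : E3 | |t| + r₁ < ‖x‖ ∧ ‖x‖ < |t| + r₂}, |freeWave G x t| ^ 10) ^ ((1:ℝ)/2) :=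
    integral_nonneg fun t => Real.rpow_nonneg (hIt0 t) _
  have hTle : (∫ t : ℝ,
      (∫ x in {x : E3 | |t| + r₁ < ‖x‖ ∧ ‖x‖ < |t| + r₂}, |freeWave G x t| ^ 10) ^ ((1:ℝ)/2))
      ≤ D * ((R * Real.sqrt R)⁻¹ * (R * K0)) := by
    calc (∫ t : ℝ,
        (∫ x in {x : E3 | |t| + r₁ < ‖x‖ ∧ ‖x‖ < |t| + r₂}, |freeWave G x t| ^ 10) ^ ((1:ℝ)/2))
        ≤ ∫ t : ℝ, D * gR t :=
          integral_mono_of_nonneg (ae_of_all _ fun t => Real.rpow_nonneg (hIt0 t) _)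
            (hgRint.const_mul D) (ae_of_all _ hsqrt_bound)
      _ = D * ∫ t : ℝ, gR t := integral_const_mul _ _
      _ = D * ((R * Real.sqrt R)⁻¹ * (R * K0)) := by rw [hgRval]
  -- conclude
  have hY : Ynorm (channel r₁ r₂) (freeWave G)
      = (∫ t : ℝ,
        (∫ x in {x : E3 | |t| + r₁ < ‖x‖ ∧ ‖x‖ < |t| + r₂}, |freeWave G x t| ^ 10) ^ ((1:ℝ)/2))
        ^ ((1:ℝ)/5) := rfl
  rw [hY]
  have step1 := Real.rpow_le_rpow hT0 hTle (by norm_num : (0:ℝ) ≤ (1:ℝ)/5)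
  refine step1.trans ?_
  have hinner : D * ((R * Real.sqrt R)⁻¹ * (R * K0))
      = (Real.sqrt (6912 * uc) * K0) * (Real.sqrt (r₂ - r₁) * (Real.sqrt R)⁻¹ * N ^ 5) := by
    rw [hDdef, Real.sqrt_mul (mul_nonneg (by norm_num) uc_pos.le)]
    field_simp
  rw [hinner]
  have hX0 : 0 ≤ Real.sqrt (r₂ - r₁) * (Real.sqrt R)⁻¹ * N ^ 5 :=
    mul_nonneg (mul_nonneg (Real.sqrt_nonneg _) (inv_nonneg.mpr (Real.sqrt_nonneg _)))
      (pow_nonneg hN0 5)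
  rw [Real.mul_rpow hA0 hX0]
  have hXval : (Real.sqrt (r₂ - r₁) * (Real.sqrt R)⁻¹ * N ^ 5) ^ ((1:ℝ)/5)
      = (r₂ - r₁) ^ ((1:ℝ)/10) * (R ^ ((1:ℝ)/10))⁻¹ * N := by
    rw [Real.mul_rpow (mul_nonneg (Real.sqrt_nonneg _) (inv_nonneg.mpr (Real.sqrt_nonneg _)))
        (pow_nonneg hN0 5),
      Real.mul_rpow (Real.sqrt_nonneg _) (inv_nonneg.mpr (Real.sqrt_nonneg _)),
      Real.inv_rpow (Real.sqrt_nonneg _),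
      Real.sqrt_eq_rpow, Real.sqrt_eq_rpow,
      ← Real.rpow_natCast N 5,
      ← Real.rpow_mul h21, ← Real.rpow_mul hR.le, ← Real.rpow_mul hN0]
    norm_num
  rw [hXval]
  have hE0 : 0 ≤ (r₂ - r₁) ^ ((1:ℝ)/10) * (R ^ ((1:ℝ)/10))⁻¹ * N :=
    mul_nonneg (mul_nonneg (Real.rpow_nonneg h21 _)
      (inv_nonneg.mpr (Real.rpow_nonneg hR.le _))) hN0
  have hAC : (Real.sqrt (6912 * uc) * K0) ^ ((1:ℝ)/5) ≤ C := by
    rw [hCdef]; linarith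
  calc (Real.sqrt (6912 * uc) * K0) ^ ((1:ℝ)/5)
        * ((r₂ - r₁) ^ ((1:ℝ)/10) * (R ^ ((1:ℝ)/10))⁻¹ * N)
      ≤ C * ((r₂ - r₁) ^ ((1:ℝ)/10) * (R ^ ((1:ℝ)/10))⁻¹ * N) :=
        mul_le_mul_of_nonneg_right hAC hE0
    _ = C * ((r₂ - r₁) / R) ^ ((1:ℝ)/10) * N := by
        rw [Real.div_rpow h21 hR.le, div_eq_mul_inv]
        ring
end
end
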